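/- arXiv:1711.07564 — 3 statements merged into one kernel-verified Lean document; each statement's English description precedes it below -/
import Mathlib

section
/- (Linear convergence of Simulated SVRG in expectation, option II.) Consider the Simulated SVRG algorithm: at each epoch s, the reference point x̃ = x̃_{s−1} with full gradient h̃ = ∇F(x̃) is fixed, and for t = 1,...,M the iterate is updated by x_t = x_{t−1} − λ ν_t, where ν_t = W(x_{t−1}, v_t) − W(x̃, v_t) + ∇F(x̃) is the variance-reduced simulated gradient (with v_t sampled from v independently, and W(·, v_t) the coupled MLMC unbiased gradient estimators sharing the same randomness); the epoch output x̃_s = x_t for t chosen uniformly at random from {0,...,M−1}. Suppose the step size λ and epoch length M satisfy α = 1/(μ(1 − (4/μ)C_D λ)λM) + ((4/μ)C_D + 2L)λ/(1 − (4/μ)C_D λ) < 1. Then under Assumptions 1–3, E[F(x̃_s)] ≤ F(x⋆) + α^s [F(x̃_0) − F(x⋆)] for all epochs s, where x⋆ is the minimizer of F. -/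
open MeasureTheory
open scoped RealInnerProductSpace

set_option maxHeartbeats 1000000

lemma coord_abs_le_norm {q : ℕ} (x : EuclideanSpace ℝ (Fin q)) (i : Fin q) :
    |x i| ≤ ‖x‖ := by
  have h1 : |x i| ^ 2 ≤ ‖x‖ ^ 2 := by
    rw [EuclideanSpace.norm_eq, Real.sq_sqrt (by positivity)]
    calc |x i| ^ 2 = ‖x i‖ ^ 2 := by rw [Real.norm_eq_abs]
      _ ≤ ∑ j, ‖x j‖ ^ 2 :=
        Finset.single_le_sum (f := fun j => ‖x j‖ ^ 2) (fun j _ => by positivity)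
          (Finset.mem_univ i)
  calc |x i| = Real.sqrt (|x i| ^ 2) := by rw [Real.sqrt_sq (abs_nonneg _)]
    _ ≤ Real.sqrt (‖x‖ ^ 2) := Real.sqrt_le_sqrt h1
    _ = ‖x‖ := Real.sqrt_sq (norm_nonneg _)

lemma condexp_coord {Ω : Type*} {m : MeasurableSpace Ω} [mΩ : MeasurableSpace Ω]
    {P : Measure Ω} [IsProbabilityMeasure P] (hm : m ≤ mΩ) {q : ℕ}
    {f : Ω → EuclideanSpace ℝ (Fin q)} (hf : Integrable f P) (i : Fin q) :
    (fun ω => (P[f|m]) ω i) =ᵐ[P] P[fun ω => f ω i|m] := by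
  have hproj : ∀ (g : Ω → EuclideanSpace ℝ (Fin q)), Integrable g P →
      Integrable (fun ω => g ω i) P := by
    intro g hg
    have := (EuclideanSpace.proj (𝕜 := ℝ) i).integrable_comp hg
    simpa only [PiLp.proj_apply] using this
  have hfi := hproj f hf
  have hcie : Integrable (P[f|m]) P := integrable_condExp
  refine ae_eq_condExp_of_forall_setIntegral_eq hm hfi ?_ ?_ ?_
  · intro s _ _
    exact (hproj _ hcie).integrableOn
  · intro s hs _
    have h1 : ∫ ω in s, (P[f|m]) ω i ∂P = (∫ ω in s, (P[f|m]) ω ∂P) i := by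
      have := (EuclideanSpace.proj (𝕜 := ℝ) i).integral_comp_comm
        (hcie.integrableOn (s := s))
      simpa only [PiLp.proj_apply] using this
    have h2 : ∫ ω in s, f ω i ∂P = (∫ ω in s, f ω ∂P) i := by
      have := (EuclideanSpace.proj (𝕜 := ℝ) i).integral_comp_comm
        (hf.integrableOn (s := s))
      simpa only [PiLp.proj_apply] using this
    rw [h1, h2, setIntegral_condExp hm hf hs]
  · have : StronglyMeasurable[m] (fun ω => (P[f|m]) ω i) :=
      (EuclideanSpace.proj (𝕜 := ℝ) i).continuous.comp_stronglyMeasurable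
        stronglyMeasurable_condExp
    exact this.aestronglyMeasurable

lemma integral_inner_condexp {Ω : Type*} {m : MeasurableSpace Ω} [mΩ : MeasurableSpace Ω]
    {P : Measure Ω} [IsProbabilityMeasure P] (hm : m ≤ mΩ) {q : ℕ}
    {f G Y : Ω → EuclideanSpace ℝ (Fin q)} (hf : Integrable f P)
    (hG : P[f|m] =ᵐ[P] G) (hY : StronglyMeasurable[m] Y) {c : ℝ}
    (hYb : ∀ ω, ‖Y ω‖ ≤ c) :
    ∫ ω, ⟪f ω, Y ω⟫ ∂P = ∫ ω, ⟪G ω, Y ω⟫ ∂P := by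
  have hGint : Integrable G P := integrable_condExp.congr hG
  have hproj : ∀ (g : Ω → EuclideanSpace ℝ (Fin q)), Integrable g P →
      ∀ i, Integrable (fun ω => g ω i) P := by
    intro g hg i
    have := (EuclideanSpace.proj (𝕜 := ℝ) i).integrable_comp hg
    simpa only [PiLp.proj_apply] using this
  have hfi := hproj f hf
  have hGi := hproj G hGint
  have hYi : ∀ i, StronglyMeasurable[m] (fun ω => Y ω i) := fun i =>
    (EuclideanSpace.proj (𝕜 := ℝ) i).continuous.comp_stronglyMeasurable hY
  have hYib : ∀ i ω, ‖Y ω i‖ ≤ c := fun i ω =>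
    le_trans (by simpa [Real.norm_eq_abs] using coord_abs_le_norm (Y ω) i) (hYb ω)
  have hYmΩ : ∀ i, AEStronglyMeasurable (fun ω => Y ω i) P := fun i =>
    ((hYi i).mono hm).aestronglyMeasurable
  have hint1 : ∀ i, Integrable (fun ω => Y ω i * f ω i) P := fun i =>
    (hfi i).bdd_mul (hYmΩ i) (ae_of_all _ (hYib i))
  have hint2 : ∀ i, Integrable (fun ω => Y ω i * G ω i) P := fun i =>
    (hGi i).bdd_mul (hYmΩ i) (ae_of_all _ (hYib i))
  have key : ∀ i, ∫ ω, Y ω i * f ω i ∂P = ∫ ω, Y ω i * G ω i ∂P := by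
    intro i
    have hmul := condExp_stronglyMeasurable_mul_of_bound hm (hYi i) (hfi i) c
      (ae_of_all _ (hYib i))
    have hcoord := condexp_coord hm hf i
    have hGcoord : (fun ω => (P[f|m]) ω i) =ᵐ[P] fun ω => G ω i :=
      hG.mono fun ω h => congrArg (fun v => v i) h
    have heq : P[(fun ω => Y ω i) * (fun ω => f ω i)|m] =ᵐ[P]
        fun ω => Y ω i * G ω i := by
      refine hmul.trans ?_
      filter_upwards [hcoord.symm.trans hGcoord] with ω h
      simp only [Pi.mul_apply]
      rw [h]
    calc ∫ ω, Y ω i * f ω i ∂P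
        = ∫ ω, (P[(fun ω => Y ω i) * (fun ω => f ω i)|m]) ω ∂P := by
          rw [integral_condExp hm]; rfl
      _ = ∫ ω, Y ω i * G ω i ∂P := integral_congr_ae heq
  have hinner : ∀ (g : Ω → EuclideanSpace ℝ (Fin q)) (ω : Ω),
      ⟪g ω, Y ω⟫ = ∑ i, Y ω i * g ω i := by
    intro g ω
    rw [PiLp.inner_apply]
    exact Finset.sum_congr rfl fun i _ => by
      simp [RCLike.inner_apply, mul_comm]
  calc ∫ ω, ⟪f ω, Y ω⟫ ∂P = ∫ ω, ∑ i, Y ω i * f ω i ∂P := by simp_rw [hinner]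
    _ = ∑ i, ∫ ω, Y ω i * f ω i ∂P := integral_finset_sum _ fun i _ => hint1 i
    _ = ∑ i, ∫ ω, Y ω i * G ω i ∂P := Finset.sum_congr rfl fun i _ => key i
    _ = ∫ ω, ∑ i, Y ω i * G ω i ∂P := (integral_finset_sum _ fun i _ => hint2 i).symm
    _ = ∫ ω, ⟪G ω, Y ω⟫ ∂P := by simp_rw [hinner]

/-- (Linear convergence of Simulated SVRG in expectation, option II.)
Epoch `s+1` starts from the reference `xt s` (with `xt 0 ≡ x0` the deterministic initial
point), runs `M` inner steps `X s (t+1) = X s t − λ ν s (t+1)` with the variance-reduced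
simulated gradient `ν s (t+1) = Wd s (t+1) + ∇F(xt s)`, where conditionally on the past
`E[Wd s (t+1) | 𝓕 s t] = ∇F(X s t) − ∇F(xt s)` (unbiasedness of the coupled MLMC estimators)
and `E[‖Wd s (t+1)‖² | 𝓕 s t] ≤ C_D ‖X s t − xt s‖²` (coupling bound); the epoch output
`xt (s+1)` is `X s t` for `t` uniform on `{0, …, M−1}` (option II, expressed through `hout`).
If `λ` and `M` are such that
`α = 1/(μ(1 − (4/μ)C_D λ)λM) + ((4/μ)C_D + 2L)λ/(1 − (4/μ)C_D λ) < 1`, then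
`E[F(xt s)] ≤ F(x⋆) + α^s (F(x0) − F(x⋆))` for every epoch `s`. -/
theorem simulated_svrg_linear_convergence
    {q : ℕ} {Ω : Type*} [mΩ : MeasurableSpace Ω] (P : Measure Ω) [IsProbabilityMeasure P]
    (F : EuclideanSpace ℝ (Fin q) → ℝ)
    (gradF : EuclideanSpace ℝ (Fin q) → EuclideanSpace ℝ (Fin q))
    (hgrad : ∀ x, HasGradientAt F (gradF x) x)
    (D : Set (EuclideanSpace ℝ (Fin q))) (hDcpt : IsCompact D)
    (μ L CD : ℝ) (hμ : 0 < μ) (hL : 0 < L) (hCD : 0 < CD)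
    (xstar : EuclideanSpace ℝ (Fin q)) (hstarD : xstar ∈ D) (hmin : ∀ y, F xstar ≤ F y)
    -- Assumption 2: μ-strong convexity of F on D (first-order form) and L-smoothness bound
    (hsc : ∀ x ∈ D, ∀ y ∈ D, F x + ⟪gradF x, y - x⟫ + μ / 2 * ‖y - x‖ ^ 2 ≤ F y)
    (hsm : ∀ x ∈ D, ‖gradF x‖ ^ 2 ≤ 2 * L * (F x - F xstar))
    -- step size, epoch length and the contraction factor α
    (M : ℕ) (hM : 1 ≤ M) (lam : ℝ) (hlam : 0 < lam)
    (hden : 0 < 1 - 4 / μ * CD * lam)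
    (α : ℝ)
    (hα : α = 1 / (μ * (1 - 4 / μ * CD * lam) * lam * M)
        + (4 / μ * CD + 2 * L) * lam / (1 - 4 / μ * CD * lam))
    (hα1 : α < 1)
    -- the algorithm: epoch outputs `xt`, inner iterates `X`, gradients `ν = Wd + ∇F(x̃)`
    (x0 : EuclideanSpace ℝ (Fin q)) (hx0D : x0 ∈ D)
    (xt : ℕ → Ω → EuclideanSpace ℝ (Fin q))
    (X ν Wd : ℕ → ℕ → Ω → EuclideanSpace ℝ (Fin q))
    (𝓕 : ℕ → ℕ → MeasurableSpace Ω)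
    (hle : ∀ s t, 𝓕 s t ≤ mΩ) (hmono : ∀ s, Monotone (𝓕 s))
    (hXmeas : ∀ s t, StronglyMeasurable[𝓕 s t] (X s t))
    (hrefmeas : ∀ s, StronglyMeasurable[𝓕 s 0] (xt s))
    (hx0 : ∀ ω, xt 0 ω = x0)
    (hstart : ∀ s ω, X s 0 ω = xt s ω)
    (hupdate : ∀ s t ω, X s (t + 1) ω = X s t ω - lam • ν s (t + 1) ω)
    (hν : ∀ s t ω, ν s (t + 1) ω = Wd s (t + 1) ω + gradF (xt s ω))
    -- Assumption 1: all iterates stay in the compact set D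
    (hinD : ∀ s t ω, X s t ω ∈ D) (hrefD : ∀ s ω, xt s ω ∈ D)
    -- integrability
    (hWdint : ∀ s t, Integrable (Wd s (t + 1)) P)
    (hWdsq : ∀ s t, Integrable (fun ω => ‖Wd s (t + 1) ω‖ ^ 2) P)
    (hFint : ∀ s, Integrable (fun ω => F (xt s ω)) P)
    (hFXint : ∀ s t, Integrable (fun ω => F (X s t ω)) P)
    -- unbiasedness and the coupling (variance-reduction) bound, conditionally on the past
    (hunbias : ∀ s t, P[Wd s (t + 1) | 𝓕 s t]
        =ᵐ[P] fun ω => gradF (X s t ω) - gradF (xt s ω))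
    (hcouple : ∀ s t, (P[fun ω => ‖Wd s (t + 1) ω‖ ^ 2 | 𝓕 s t])
        ≤ᵐ[P] fun ω => CD * ‖X s t ω - xt s ω‖ ^ 2)
    -- option II: the epoch output is a uniformly chosen inner iterate
    (hout : ∀ s, ∫ ω, F (xt (s + 1) ω) ∂P
        = (1 / M) * ∑ t ∈ Finset.range M, ∫ ω, F (X s t ω) ∂P) :
    ∀ s : ℕ, ∫ ω, F (xt s ω) ∂P ≤ F xstar + α ^ s * (F x0 - F xstar) := by
  classical
  -- basic positivity
  have hMpos : (0:ℝ) < M := by exact_mod_cast Nat.lt_of_lt_of_le Nat.zero_lt_one hM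
  have hA0 : 0 < 4 / μ * CD := mul_pos (div_pos (by norm_num) hμ) hCD
  have hα_pos : 0 < α := by
    rw [hα]
    have h1 : 0 < μ * (1 - 4 / μ * CD * lam) * lam * M :=
      mul_pos (mul_pos (mul_pos hμ hden) hlam) hMpos
    have h2 : 0 < (4 / μ * CD + 2 * L) * lam := mul_pos (by linarith) hlam
    exact add_pos (div_pos one_pos h1) (div_pos h2 hden)
  -- gradient facts
  have hdiff : ∀ x, HasFDerivAt F
      ((InnerProductSpace.toDual ℝ (EuclideanSpace ℝ (Fin q))) (gradF x)) x :=
    fun x => (hgrad x).hasFDerivAt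
  have hFcont : Continuous F := by
    have : Differentiable ℝ F := fun x => (hdiff x).differentiableAt
    exact this.continuous
  have hg0 : gradF xstar = 0 := by
    have hlm : IsLocalMin F xstar := Filter.Eventually.of_forall hmin
    have h := hlm.hasFDerivAt_eq_zero (hdiff xstar)
    apply (InnerProductSpace.toDual ℝ (EuclideanSpace ℝ (Fin q))).injective
    simpa using h
  have hgmeas : Measurable gradF := by
    have h1 : Measurable (fderiv ℝ F) := measurable_fderiv ℝ F
    have h2 : gradF = fun x =>
        (InnerProductSpace.toDual ℝ (EuclideanSpace ℝ (Fin q))).symm (fderiv ℝ F x) := by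
      funext x
      rw [(hdiff x).fderiv]
      simp
    rw [h2]
    exact ((InnerProductSpace.toDual ℝ
      (EuclideanSpace ℝ (Fin q))).symm.continuous.measurable).comp h1
  -- bounds on D
  obtain ⟨RD, hRD⟩ : ∃ R, ∀ x ∈ D, ‖x‖ ≤ R := isBounded_iff_forall_norm_le.mp hDcpt.isBounded
  obtain ⟨CF, hCFb⟩ :=
    hDcpt.exists_bound_of_continuousOn ((hFcont.sub continuous_const).continuousOn)
  have hF0 : ∀ x ∈ D, 0 ≤ F x - F xstar := fun x _ => sub_nonneg.2 (hmin x)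
  have hCF : ∀ x ∈ D, F x - F xstar ≤ CF := fun x hx => by
    have h := hCFb x hx
    rw [Real.norm_eq_abs] at h
    exact (le_abs_self _).trans h
  have hCF0 : 0 ≤ CF := le_trans (hF0 xstar hstarD) (hCF xstar hstarD)
  set CG := Real.sqrt (2 * L * CF) with hCG_def
  have hCG : ∀ x ∈ D, ‖gradF x‖ ≤ CG := by
    intro x hx
    have h1 : ‖gradF x‖ ^ 2 ≤ 2 * L * CF :=
      le_trans (hsm x hx) (by nlinarith [hCF x hx])
    calc ‖gradF x‖ = Real.sqrt (‖gradF x‖ ^ 2) := (Real.sqrt_sq (norm_nonneg _)).symm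
      _ ≤ CG := Real.sqrt_le_sqrt h1
  have hCG0 : 0 ≤ CG := Real.sqrt_nonneg _
  -- strong convexity consequences
  have hquad : ∀ y ∈ D, ‖y - xstar‖ ^ 2 ≤ 2 / μ * (F y - F xstar) := by
    intro y hy
    have h := hsc xstar hstarD y hy
    rw [hg0, inner_zero_left] at h
    rw [div_mul_eq_mul_div, le_div_iff₀ hμ]
    nlinarith [h]
  have hlin : ∀ x ∈ D, F x - F xstar ≤ ⟪gradF x, x - xstar⟫ := by
    intro x hx
    have h := hsc x hx xstar hstarD
    have h2 : ⟪gradF x, xstar - x⟫ = -⟪gradF x, x - xstar⟫ := by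
      rw [show xstar - x = -(x - xstar) by abel, inner_neg_right]
    rw [h2] at h
    nlinarith [mul_nonneg (le_of_lt hμ) (sq_nonneg ‖xstar - x‖)]
  -- generic integrability facts
  have hFsub_int : ∀ s t, Integrable (fun ω => F (X s t ω) - F xstar) P :=
    fun s t => (hFXint s t).sub (integrable_const _)
  have hFr_int : ∀ s, Integrable (fun ω => F (xt s ω) - F xstar) P :=
    fun s => (hFint s).sub (integrable_const _)
  have hint_sub_eq : ∀ (g : Ω → ℝ), Integrable g P →
      ∫ ω, (g ω - F xstar) ∂P = (∫ ω, g ω ∂P) - F xstar := by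
    intro g hg
    rw [integral_sub hg (integrable_const _), integral_const]
    simp
  -- the per-epoch contraction
  have hepoch : ∀ s, ∫ ω, (F (xt (s+1) ω) - F xstar) ∂P
      ≤ α * ∫ ω, (F (xt s ω) - F xstar) ∂P := by
    intro s
    set cs := ∫ ω, (F (xt s ω) - F xstar) ∂P with hcs_def
    have hcs0 : 0 ≤ cs := integral_nonneg fun ω => hF0 _ (hrefD s ω)
    -- measurability
    have hXaem : ∀ t, AEStronglyMeasurable (X s t) P := fun t =>
      ((hXmeas s t).mono (hle s t)).aestronglyMeasurable
    have hraem : AEStronglyMeasurable (xt s) P :=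
      ((hrefmeas s).mono (hle s 0)).aestronglyMeasurable
    have hXmeas' : ∀ t, Measurable (X s t) := fun t => ((hXmeas s t).mono (hle s t)).measurable
    have hrmeas' : Measurable (xt s) := ((hrefmeas s).mono (hle s 0)).measurable
    have hgX : ∀ t, AEStronglyMeasurable (fun ω => gradF (X s t ω)) P := fun t =>
      ((hgmeas.comp (hXmeas' t)).aestronglyMeasurable)
    have hgr : AEStronglyMeasurable (fun ω => gradF (xt s ω)) P :=
      (hgmeas.comp hrmeas').aestronglyMeasurable
    have hgr_int : Integrable (fun ω => gradF (xt s ω)) P :=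
      (integrable_const CG).mono' hgr (ae_of_all _ fun ω => hCG _ (hrefD s ω))
    have hgrsq_int : Integrable (fun ω => ‖gradF (xt s ω)‖ ^ 2) P := by
      refine (integrable_const (CG ^ 2)).mono' ?_ (ae_of_all _ fun ω => ?_)
      · simpa [sq, Pi.mul_def] using hgr.norm.mul hgr.norm
      · rw [Real.norm_eq_abs, abs_of_nonneg (by positivity)]
        exact pow_le_pow_left₀ (norm_nonneg _) (hCG _ (hrefD s ω)) 2
    set CY := RD + ‖xstar‖ with hCY_def
    have hCY0 : 0 ≤ CY := add_nonneg ((norm_nonneg _).trans (hRD _ hstarD)) (norm_nonneg _)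
    have hsqint : ∀ (g : Ω → EuclideanSpace ℝ (Fin q)) (c : ℝ), AEStronglyMeasurable g P →
        (∀ ω, ‖g ω‖ ≤ c) → Integrable (fun ω => ‖g ω‖ ^ 2) P := by
      intro g c hgm hgb
      refine (integrable_const (c ^ 2)).mono'
        (by simpa [sq, Pi.mul_def] using hgm.norm.mul hgm.norm) (ae_of_all _ fun ω => ?_)
      rw [Real.norm_eq_abs, abs_of_nonneg (by positivity)]
      exact pow_le_pow_left₀ (norm_nonneg _) (hgb ω) 2
    have hYb' : ∀ t ω, ‖X s t ω - xstar‖ ≤ CY := fun t ω =>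
      (norm_sub_le _ _).trans (add_le_add_left (hRD _ (hinD s t ω)) _)
    have hXsq_int : ∀ t, Integrable (fun ω => ‖X s t ω - xstar‖ ^ 2) P := fun t =>
      hsqint _ CY ((hXaem t).sub aestronglyMeasurable_const) (hYb' t)
    have hXr_sq_int : ∀ t, Integrable (fun ω => ‖X s t ω - xt s ω‖ ^ 2) P := fun t =>
      hsqint _ (RD + RD) ((hXaem t).sub hraem)
        (fun ω => (norm_sub_le _ _).trans
          (add_le_add (hRD _ (hinD s t ω)) (hRD _ (hrefD s ω))))
    -- the inner-loop one-step inequality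
    have hstep : ∀ t, ∫ ω, ‖X s (t+1) ω - xstar‖ ^ 2 ∂P ≤
        ∫ ω, ‖X s t ω - xstar‖ ^ 2 ∂P
          - 2 * lam * (1 - 4 / μ * CD * lam) * ∫ ω, (F (X s t ω) - F xstar) ∂P
          + 2 * lam ^ 2 * (4 / μ * CD + 2 * L) * cs := by
      intro t
      have hnu_eq : ∀ ω, ν s (t+1) ω = Wd s (t+1) ω + gradF (xt s ω) := hν s t
      have hWint := hWdint s t
      have hWsq := hWdsq s t
      have hνint : Integrable (ν s (t+1)) P :=
        (hWint.add hgr_int).congr (ae_of_all _ fun ω => (hnu_eq ω).symm)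
      have hνaem : AEStronglyMeasurable (ν s (t+1)) P := hνint.1
      have hYsm : StronglyMeasurable[𝓕 s t] (fun ω => X s t ω - xstar) :=
        (hXmeas s t).sub stronglyMeasurable_const
      have hYaem : AEStronglyMeasurable (fun ω => X s t ω - xstar) P :=
        (hYsm.mono (hle s t)).aestronglyMeasurable
      have hpt : ∀ ω, ‖X s (t+1) ω - xstar‖ ^ 2 =
          ‖X s t ω - xstar‖ ^ 2 - 2 * lam * ⟪ν s (t+1) ω, X s t ω - xstar⟫
            + lam ^ 2 * ‖ν s (t+1) ω‖ ^ 2 := by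
        intro ω
        have he : X s (t+1) ω - xstar = (X s t ω - xstar) - lam • ν s (t+1) ω := by
          rw [hupdate s t ω, sub_right_comm]
        rw [he, norm_sub_sq_real, real_inner_smul_right, norm_smul]
        simp only [Real.norm_eq_abs]
        rw [mul_pow, sq_abs, real_inner_comm]
        ring
      have hνsq_aem : AEStronglyMeasurable (fun ω => ‖ν s (t+1) ω‖ ^ 2) P := by
        simpa [sq, Pi.mul_def] using hνaem.norm.mul hνaem.norm
      have hνsq_int : Integrable (fun ω => ‖ν s (t+1) ω‖ ^ 2) P := by
        refine ((hWsq.const_mul 2).add (hgrsq_int.const_mul 2)).mono' hνsq_aem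
          (ae_of_all _ fun ω => ?_)
        simp only [Pi.add_apply]
        rw [Real.norm_eq_abs, abs_of_nonneg (by positivity)]
        have h := norm_add_le (Wd s (t+1) ω) (gradF (xt s ω))
        rw [← hnu_eq ω] at h
        have h2 : ‖ν s (t+1) ω‖ ^ 2 ≤ (‖Wd s (t+1) ω‖ + ‖gradF (xt s ω)‖) ^ 2 :=
          pow_le_pow_left₀ (norm_nonneg _) h 2
        nlinarith [sq_nonneg (‖Wd s (t+1) ω‖ - ‖gradF (xt s ω)‖)]
      have hiNY_int : Integrable (fun ω => ⟪ν s (t+1) ω, X s t ω - xstar⟫) P := by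
        refine (hνint.norm.const_mul CY).mono' (hνaem.inner hYaem) (ae_of_all _ fun ω => ?_)
        rw [Real.norm_eq_abs]
        calc |⟪ν s (t+1) ω, X s t ω - xstar⟫|
            ≤ ‖ν s (t+1) ω‖ * ‖X s t ω - xstar‖ := abs_real_inner_le_norm _ _
          _ ≤ ‖ν s (t+1) ω‖ * CY := mul_le_mul_of_nonneg_left (hYb' t ω) (norm_nonneg _)
          _ = CY * ‖ν s (t+1) ω‖ := mul_comm _ _
      have hiWY_int : Integrable (fun ω => ⟪Wd s (t+1) ω, X s t ω - xstar⟫) P := by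
        refine (hWint.norm.const_mul CY).mono' (hWint.1.inner hYaem) (ae_of_all _ fun ω => ?_)
        rw [Real.norm_eq_abs]
        calc |⟪Wd s (t+1) ω, X s t ω - xstar⟫|
            ≤ ‖Wd s (t+1) ω‖ * ‖X s t ω - xstar‖ := abs_real_inner_le_norm _ _
          _ ≤ ‖Wd s (t+1) ω‖ * CY := mul_le_mul_of_nonneg_left (hYb' t ω) (norm_nonneg _)
          _ = CY * ‖Wd s (t+1) ω‖ := mul_comm _ _
      have hbnd_inner : ∀ (g : Ω → EuclideanSpace ℝ (Fin q)) (c : ℝ),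
          AEStronglyMeasurable g P → (∀ ω, ‖g ω‖ ≤ c) →
          Integrable (fun ω => ⟪g ω, X s t ω - xstar⟫) P := by
        intro g c hgm hgb
        refine (integrable_const (c * CY)).mono' (hgm.inner hYaem) (ae_of_all _ fun ω => ?_)
        rw [Real.norm_eq_abs]
        calc |⟪g ω, X s t ω - xstar⟫|
            ≤ ‖g ω‖ * ‖X s t ω - xstar‖ := abs_real_inner_le_norm _ _
          _ ≤ c * CY := mul_le_mul (hgb ω) (hYb' t ω) (norm_nonneg _)
              (le_trans (norm_nonneg _) (hgb ω))
      have higrY_int : Integrable (fun ω => ⟪gradF (xt s ω), X s t ω - xstar⟫) P :=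
        hbnd_inner _ CG hgr (fun ω => hCG _ (hrefD s ω))
      have higXY_int : Integrable (fun ω => ⟪gradF (X s t ω), X s t ω - xstar⟫) P :=
        hbnd_inner _ CG (hgX t) (fun ω => hCG _ (hinD s t ω))
      have hiGY_int : Integrable
          (fun ω => ⟪gradF (X s t ω) - gradF (xt s ω), X s t ω - xstar⟫) P :=
        hbnd_inner (fun ω => gradF (X s t ω) - gradF (xt s ω)) (CG + CG)
          ((hgX t).sub hgr) (fun ω => (norm_sub_le _ _).trans
            (add_le_add (hCG _ (hinD s t ω)) (hCG _ (hrefD s ω))))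
      have hsplit : ∫ ω, ‖X s (t+1) ω - xstar‖ ^ 2 ∂P =
          ∫ ω, ‖X s t ω - xstar‖ ^ 2 ∂P
            - 2 * lam * ∫ ω, ⟪ν s (t+1) ω, X s t ω - xstar⟫ ∂P
            + lam ^ 2 * ∫ ω, ‖ν s (t+1) ω‖ ^ 2 ∂P := by
        calc ∫ ω, ‖X s (t+1) ω - xstar‖ ^ 2 ∂P
            = ∫ ω, (‖X s t ω - xstar‖ ^ 2 - 2 * lam * ⟪ν s (t+1) ω, X s t ω - xstar⟫
                + lam ^ 2 * ‖ν s (t+1) ω‖ ^ 2) ∂P := integral_congr_ae (ae_of_all _ hpt)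
          _ = _ := by
              have hB : Integrable (fun ω => 2 * lam * ⟪ν s (t+1) ω, X s t ω - xstar⟫) P :=
                hiNY_int.const_mul (2 * lam)
              have hC : Integrable (fun ω => lam ^ 2 * ‖ν s (t+1) ω‖ ^ 2) P :=
                hνsq_int.const_mul (lam ^ 2)
              have hAB : Integrable (fun ω => ‖X s t ω - xstar‖ ^ 2
                  - 2 * lam * ⟪ν s (t+1) ω, X s t ω - xstar⟫) P := (hXsq_int t).sub hB
              rw [integral_add hAB hC, integral_sub (hXsq_int t) hB,
                integral_const_mul, integral_const_mul]
      have hcross : ∫ ω, (F (X s t ω) - F xstar) ∂P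
          ≤ ∫ ω, ⟪ν s (t+1) ω, X s t ω - xstar⟫ ∂P := by
        have e1 : ∫ ω, ⟪ν s (t+1) ω, X s t ω - xstar⟫ ∂P =
            ∫ ω, ⟪Wd s (t+1) ω, X s t ω - xstar⟫ ∂P
              + ∫ ω, ⟪gradF (xt s ω), X s t ω - xstar⟫ ∂P := by
          rw [← integral_add hiWY_int higrY_int]
          refine integral_congr_ae (ae_of_all _ fun ω => ?_)
          show ⟪ν s (t+1) ω, X s t ω - xstar⟫ =
            ⟪Wd s (t+1) ω, X s t ω - xstar⟫ + ⟪gradF (xt s ω), X s t ω - xstar⟫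
          rw [hnu_eq ω, inner_add_left]
        have e2 : ∫ ω, ⟪Wd s (t+1) ω, X s t ω - xstar⟫ ∂P =
            ∫ ω, ⟪gradF (X s t ω) - gradF (xt s ω), X s t ω - xstar⟫ ∂P :=
          integral_inner_condexp (hle s t) hWint (hunbias s t) hYsm (hYb' t)
        have e3 : ∫ ω, ⟪gradF (X s t ω) - gradF (xt s ω), X s t ω - xstar⟫ ∂P
            + ∫ ω, ⟪gradF (xt s ω), X s t ω - xstar⟫ ∂P
            = ∫ ω, ⟪gradF (X s t ω), X s t ω - xstar⟫ ∂P := by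
          rw [← integral_add hiGY_int higrY_int]
          refine integral_congr_ae (ae_of_all _ fun ω => ?_)
          show ⟪gradF (X s t ω) - gradF (xt s ω), X s t ω - xstar⟫
              + ⟪gradF (xt s ω), X s t ω - xstar⟫ = ⟪gradF (X s t ω), X s t ω - xstar⟫
          rw [inner_sub_left]
          ring
        have e4 : ∫ ω, (F (X s t ω) - F xstar) ∂P
            ≤ ∫ ω, ⟪gradF (X s t ω), X s t ω - xstar⟫ ∂P :=
          integral_mono (hFsub_int s t) higXY_int (fun ω => hlin _ (hinD s t ω))
        linarith [e1, e2, e3, e4]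
      have hW2 : ∫ ω, ‖Wd s (t+1) ω‖ ^ 2 ∂P ≤ CD * ∫ ω, ‖X s t ω - xt s ω‖ ^ 2 ∂P := by
        have h1 : ∫ ω, ‖Wd s (t+1) ω‖ ^ 2 ∂P
            = ∫ ω, (P[fun ω => ‖Wd s (t+1) ω‖ ^ 2|𝓕 s t]) ω ∂P :=
          (integral_condExp (hle s t)).symm
        have h2 : ∫ ω, (P[fun ω => ‖Wd s (t+1) ω‖ ^ 2|𝓕 s t]) ω ∂P
            ≤ ∫ ω, CD * ‖X s t ω - xt s ω‖ ^ 2 ∂P :=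
          integral_mono_ae integrable_condExp ((hXr_sq_int t).const_mul CD) (hcouple s t)
        rw [integral_const_mul] at h2
        linarith [h1, h2]
      have hXr_le : ∫ ω, ‖X s t ω - xt s ω‖ ^ 2 ∂P ≤
          4 / μ * ∫ ω, (F (X s t ω) - F xstar) ∂P + 4 / μ * cs := by
        have hpt2 : ∀ ω, ‖X s t ω - xt s ω‖ ^ 2 ≤
            4 / μ * (F (X s t ω) - F xstar) + 4 / μ * (F (xt s ω) - F xstar) := by
          intro ω
          have d1 := hquad _ (hinD s t ω)
          have d2 := hquad _ (hrefD s ω)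
          have h := norm_sub_le (X s t ω - xstar) (xt s ω - xstar)
          rw [sub_sub_sub_cancel_right] at h
          have h2 : ‖X s t ω - xt s ω‖ ^ 2
              ≤ (‖X s t ω - xstar‖ + ‖xt s ω - xstar‖) ^ 2 :=
            pow_le_pow_left₀ (norm_nonneg _) h 2
          have h3 : (‖X s t ω - xstar‖ + ‖xt s ω - xstar‖) ^ 2
              ≤ 2 * ‖X s t ω - xstar‖ ^ 2 + 2 * ‖xt s ω - xstar‖ ^ 2 := by
            nlinarith [sq_nonneg (‖X s t ω - xstar‖ - ‖xt s ω - xstar‖)]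
          ring_nf at d1 d2 ⊢
          linarith [h2, h3, d1, d2]
        have hI1 : Integrable (fun ω => 4 / μ * (F (X s t ω) - F xstar)) P :=
          (hFsub_int s t).const_mul _
        have hI2 : Integrable (fun ω => 4 / μ * (F (xt s ω) - F xstar)) P :=
          (hFr_int s).const_mul _
        have hIsum : Integrable (fun ω => 4 / μ * (F (X s t ω) - F xstar)
            + 4 / μ * (F (xt s ω) - F xstar)) P := hI1.add hI2
        have h := integral_mono (hXr_sq_int t) hIsum hpt2
        rwa [integral_add hI1 hI2, integral_const_mul, integral_const_mul] at h
      have hgr2 : ∫ ω, ‖gradF (xt s ω)‖ ^ 2 ∂P ≤ 2 * L * cs := by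
        have h := integral_mono hgrsq_int ((hFr_int s).const_mul (2*L))
          (fun ω => hsm _ (hrefD s ω))
        rwa [integral_const_mul] at h
      have hν2 : ∫ ω, ‖ν s (t+1) ω‖ ^ 2 ∂P ≤
          2 * ∫ ω, ‖Wd s (t+1) ω‖ ^ 2 ∂P + 2 * ∫ ω, ‖gradF (xt s ω)‖ ^ 2 ∂P := by
        have hpt3 : ∀ ω, ‖ν s (t+1) ω‖ ^ 2 ≤
            2 * ‖Wd s (t+1) ω‖ ^ 2 + 2 * ‖gradF (xt s ω)‖ ^ 2 := by
          intro ω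
          have h := norm_add_le (Wd s (t+1) ω) (gradF (xt s ω))
          rw [← hnu_eq ω] at h
          have h2 : ‖ν s (t+1) ω‖ ^ 2 ≤ (‖Wd s (t+1) ω‖ + ‖gradF (xt s ω)‖) ^ 2 :=
            pow_le_pow_left₀ (norm_nonneg _) h 2
          nlinarith [sq_nonneg (‖Wd s (t+1) ω‖ - ‖gradF (xt s ω)‖)]
        have hI1 : Integrable (fun ω => 2 * ‖Wd s (t+1) ω‖ ^ 2) P := hWsq.const_mul 2
        have hI2 : Integrable (fun ω => 2 * ‖gradF (xt s ω)‖ ^ 2) P :=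
          hgrsq_int.const_mul 2
        have hIsum : Integrable (fun ω => 2 * ‖Wd s (t+1) ω‖ ^ 2
            + 2 * ‖gradF (xt s ω)‖ ^ 2) P := hI1.add hI2
        have h := integral_mono hνsq_int hIsum hpt3
        rwa [integral_add hI1 hI2, integral_const_mul, integral_const_mul] at h
      have m1 : 2 * lam * ∫ ω, (F (X s t ω) - F xstar) ∂P ≤
          2 * lam * ∫ ω, ⟪ν s (t+1) ω, X s t ω - xstar⟫ ∂P :=
        mul_le_mul_of_nonneg_left hcross (by positivity)
      have m2 : lam ^ 2 * ∫ ω, ‖ν s (t+1) ω‖ ^ 2 ∂P ≤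
          lam ^ 2 * (2 * (CD * (4 / μ * ∫ ω, (F (X s t ω) - F xstar) ∂P + 4 / μ * cs))
            + 2 * (2 * L * cs)) := by
        refine mul_le_mul_of_nonneg_left ?_ (sq_nonneg lam)
        have hCD' : CD * ∫ ω, ‖X s t ω - xt s ω‖ ^ 2 ∂P ≤
            CD * (4 / μ * ∫ ω, (F (X s t ω) - F xstar) ∂P + 4 / μ * cs) :=
          mul_le_mul_of_nonneg_left hXr_le hCD.le
        linarith [hW2, hgr2, hν2, hCD']
      rw [hsplit]
      nlinarith [m1, m2]
    -- accumulate over the epoch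
    have hacc : ∀ n, ∫ ω, ‖X s n ω - xstar‖ ^ 2 ∂P
        + 2 * lam * (1 - 4 / μ * CD * lam)
          * ∑ t ∈ Finset.range n, ∫ ω, (F (X s t ω) - F xstar) ∂P
        ≤ ∫ ω, ‖X s 0 ω - xstar‖ ^ 2 ∂P
          + n * (2 * lam ^ 2 * (4 / μ * CD + 2 * L) * cs) := by
      intro n
      induction n with
      | zero => simp
      | succ n ih =>
        rw [Finset.sum_range_succ]
        have h := hstep n
        push_cast
        nlinarith [ih, h]
    have haM := hacc M
    have haM0 : 0 ≤ ∫ ω, ‖X s M ω - xstar‖ ^ 2 ∂P := integral_nonneg fun ω => by positivity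
    have ha0 : ∫ ω, ‖X s 0 ω - xstar‖ ^ 2 ∂P ≤ 2 / μ * cs := by
      have hpt : ∀ ω, ‖X s 0 ω - xstar‖ ^ 2 ≤ 2 / μ * (F (xt s ω) - F xstar) := fun ω => by
        rw [hstart s ω]; exact hquad _ (hrefD s ω)
      have h := integral_mono (hXsq_int 0) ((hFr_int s).const_mul _) hpt
      rwa [integral_const_mul] at h
    have hsum_eq : ∑ t ∈ Finset.range M, ∫ ω, (F (X s t ω) - F xstar) ∂P
        = M * ∫ ω, (F (xt (s+1) ω) - F xstar) ∂P := by
      have h1 : ∀ t, ∫ ω, (F (X s t ω) - F xstar) ∂P = (∫ ω, F (X s t ω) ∂P) - F xstar :=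
        fun t => hint_sub_eq _ (hFXint s t)
      have h2 : ∫ ω, (F (xt (s+1) ω) - F xstar) ∂P
          = (∫ ω, F (xt (s+1) ω) ∂P) - F xstar := hint_sub_eq _ (hFint (s+1))
      have h3 := hout s
      have hMne : (M:ℝ) ≠ 0 := ne_of_gt hMpos
      have h4 : (∑ t ∈ Finset.range M, ∫ ω, F (X s t ω) ∂P)
          = M * ∫ ω, F (xt (s+1) ω) ∂P := by
        field_simp at h3
        linarith [h3]
      calc ∑ t ∈ Finset.range M, ∫ ω, (F (X s t ω) - F xstar) ∂P
          = (∑ t ∈ Finset.range M, ∫ ω, F (X s t ω) ∂P) - M * F xstar := by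
            simp only [h1]
            rw [Finset.sum_sub_distrib, Finset.sum_const, Finset.card_range, nsmul_eq_mul]
        _ = M * ∫ ω, F (xt (s+1) ω) ∂P - M * F xstar := by rw [h4]
        _ = M * ∫ ω, (F (xt (s+1) ω) - F xstar) ∂P := by rw [h2]; ring
    rw [hsum_eq] at haM
    have hbase : 0 < 2 * lam * (1 - 4 / μ * CD * lam) * M :=
      mul_pos (mul_pos (by linarith) hden) hMpos
    have hαmul : α * (2 * lam * (1 - 4 / μ * CD * lam) * M)
        = 2 / μ + M * (2 * lam ^ 2 * (4 / μ * CD + 2 * L)) := by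
      have hμ' : μ ≠ 0 := hμ.ne'
      have hlam' : lam ≠ 0 := hlam.ne'
      have hM' : (M:ℝ) ≠ 0 := hMpos.ne'
      have hd2 : 0 < μ - 4 * CD * lam := by
        have h := mul_pos hμ hden
        have h2 : μ * (4 / μ * CD * lam) = 4 * CD * lam := by field_simp
        nlinarith [h, h2]
      have hd2' : μ - 4 * CD * lam ≠ 0 := hd2.ne'
      rw [hα]
      field_simp
    refine le_of_mul_le_mul_left ?_ hbase
    calc 2 * lam * (1 - 4 / μ * CD * lam) * M * ∫ ω, (F (xt (s+1) ω) - F xstar) ∂P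
        = 2 * lam * (1 - 4 / μ * CD * lam)
            * (M * ∫ ω, (F (xt (s+1) ω) - F xstar) ∂P) := by ring
      _ ≤ 2 / μ * cs + M * (2 * lam ^ 2 * (4 / μ * CD + 2 * L) * cs) := by
          linarith [haM, haM0, ha0]
      _ = (2 / μ + M * (2 * lam ^ 2 * (4 / μ * CD + 2 * L))) * cs := by ring
      _ = α * (2 * lam * (1 - 4 / μ * CD * lam) * M) * cs := by rw [hαmul]
      _ = 2 * lam * (1 - 4 / μ * CD * lam) * M * (α * cs) := by ring
  -- induction on epochs
  intro s
  have hbase0 : ∫ ω, (F (xt 0 ω) - F xstar) ∂P = F x0 - F xstar := by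
    have h : (fun ω => F (xt 0 ω) - F xstar) = fun _ => F x0 - F xstar :=
      funext fun ω => by rw [hx0 ω]
    rw [h, integral_const]
    simp
  have hmain : ∀ s, ∫ ω, (F (xt s ω) - F xstar) ∂P ≤ α ^ s * (F x0 - F xstar) := by
    intro s
    induction s with
    | zero => rw [hbase0]; simp
    | succ n ih =>
      have h := hepoch n
      have h2 : α * ∫ ω, (F (xt n ω) - F xstar) ∂P ≤ α * (α ^ n * (F x0 - F xstar)) :=
        mul_le_mul_of_nonneg_left ih hα_pos.le
      calc ∫ ω, (F (xt (n+1) ω) - F xstar) ∂P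
          ≤ α * ∫ ω, (F (xt n ω) - F xstar) ∂P := h
        _ ≤ α * (α ^ n * (F x0 - F xstar)) := h2
        _ = α ^ (n+1) * (F x0 - F xstar) := by ring
  have hfin := hmain s
  rw [hint_sub_eq _ (hFint s)] at hfin
  linarith
end

section
/- (Convergence of Simulated SCSG to an ε-neighborhood.) Consider the Simulated SCSG algorithm: at epoch s, the reference x̃ = x̃_{s−1} is fixed, the reference gradient h̃(x̃) is the batch-averaged MLMC estimator with E[h̃(x̃)] = ∇F(x̃), and for t = 1,...,M the update is x_t = x_{t−1} − λν_t with ν_t = W(x_{t−1}, v_t) − W(x̃, v_t) + h̃(x̃); the epoch output x̃_s = x_t for t uniform on {0,...,M−1}. Fix ε > 0. Suppose λ and M satisfy α = 2/(μ(1 − (8/μ)C_D λ)λM) + ((8/μ)C_D + 8L)λ/(1 − (8/μ)C_D λ) < 1, and K, B are large enough that (4(λ + 1/(2μ))/(1 − (8/μ)C_D λ))·Var[h̃] < ε. Then E[F(x̃_s) − F(x⋆)] ≤ α^s E[F(x̃_0) − F(x⋆)] + ε/(1 − α). -/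
open MeasureTheory
open scoped RealInnerProductSpace

set_option maxHeartbeats 1000000

lemma aesm_of_sm {Ω β : Type*} [MeasurableSpace Ω] [TopologicalSpace β] {f : Ω → β}
    (h : StronglyMeasurable f) (P : Measure Ω) : AEStronglyMeasurable f P :=
  h.aestronglyMeasurable

lemma integral_inner_of_condexp {q : ℕ} {Ω : Type*} {m : MeasurableSpace Ω}
    [mΩ : MeasurableSpace Ω] (P : Measure Ω) [IsProbabilityMeasure P] (hm : m ≤ mΩ)
    (f g Y : Ω → EuclideanSpace ℝ (Fin q))
    (hf : Integrable f P) (hg : Integrable g P)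
    (hcond : P[f|m] =ᵐ[P] g)
    (hY : StronglyMeasurable[m] Y) (C : ℝ) (hYb : ∀ ω, ‖Y ω‖ ≤ C) :
    ∫ ω, ⟪f ω, Y ω⟫ ∂P = ∫ ω, ⟪g ω, Y ω⟫ ∂P := by
  have hfi : ∀ i : Fin q, Integrable (fun ω => f ω i) P := fun i =>
    (EuclideanSpace.proj i (𝕜 := ℝ)).integrable_comp hf
  have hgi : ∀ i : Fin q, Integrable (fun ω => g ω i) P := fun i =>
    (EuclideanSpace.proj i (𝕜 := ℝ)).integrable_comp hg
  have hYi : ∀ i : Fin q, StronglyMeasurable[m] fun ω => Y ω i := fun i =>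
    (EuclideanSpace.proj i (𝕜 := ℝ)).continuous.comp_stronglyMeasurable hY
  have hYib : ∀ (i : Fin q) ω, |Y ω i| ≤ C := fun i ω =>
    (coord_abs_le_norm (Y ω) i).trans (hYb ω)
  have hcoord : ∀ i : Fin q, P[fun ω => f ω i | m] =ᵐ[P] fun ω => g ω i := by
    intro i
    have hgm : AEStronglyMeasurable[m] g P :=
      (stronglyMeasurable_condExp.aestronglyMeasurable).congr hcond
    refine (ae_eq_condExp_of_forall_setIntegral_eq hm (hfi i)
      (fun s _ _ => (hgi i).integrableOn) ?_
      ((EuclideanSpace.proj i (𝕜 := ℝ)).continuous.comp_aestronglyMeasurable hgm)).symm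
    intro A hA _
    have h1 : ∫ ω in A, f ω ∂P = ∫ ω in A, g ω ∂P := by
      rw [← setIntegral_condExp hm hf hA]
      exact setIntegral_congr_ae (hm A hA) (hcond.mono fun ω h _ => h)
    have h2 := (EuclideanSpace.proj i (𝕜 := ℝ)).integral_comp_comm (hf.integrableOn (s := A))
    have h3 := (EuclideanSpace.proj i (𝕜 := ℝ)).integral_comp_comm (hg.integrableOn (s := A))
    calc ∫ ω in A, g ω i ∂P
        = (EuclideanSpace.proj i (𝕜 := ℝ)) (∫ ω in A, g ω ∂P) := h3
      _ = (EuclideanSpace.proj i (𝕜 := ℝ)) (∫ ω in A, f ω ∂P) := by rw [h1]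
      _ = ∫ ω in A, f ω i ∂P := h2.symm
  have prodint : ∀ (u : Ω → EuclideanSpace ℝ (Fin q)), Integrable u P →
      ∀ i : Fin q, Integrable (fun ω => Y ω i * u ω i) P := fun u hu i =>
    ((EuclideanSpace.proj i (𝕜 := ℝ)).integrable_comp hu).bdd_mul
      (aesm_of_sm ((hYi i).mono hm) P)
      (Filter.Eventually.of_forall fun ω => by simpa [Real.norm_eq_abs] using hYib i ω)
  have key : ∀ i : Fin q, ∫ ω, Y ω i * f ω i ∂P = ∫ ω, Y ω i * g ω i ∂P := by
    intro i
    have hfgint : Integrable (fun ω => Y ω i * f ω i) P := prodint f hf i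
    have hpull := condExp_mul_of_stronglyMeasurable_left (μ := P) (hYi i)
      (by exact hfgint) (hfi i)
    calc ∫ ω, Y ω i * f ω i ∂P
        = ∫ ω, (P[(fun ω => Y ω i) * (fun ω => f ω i)|m]) ω ∂P := by
          rw [integral_condExp (μ := P) (f := (fun ω => Y ω i) * (fun ω => f ω i)) hm]
          rfl
      _ = ∫ ω, Y ω i * (P[fun ω => f ω i|m]) ω ∂P := by
          refine integral_congr_ae (hpull.mono fun ω h => ?_)
          simpa [Pi.mul_apply] using h
      _ = ∫ ω, Y ω i * g ω i ∂P := by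
          refine integral_congr_ae (((hcoord i)).mono fun ω h => ?_)
          dsimp only
          rw [h]
  have expand : ∀ (u : Ω → EuclideanSpace ℝ (Fin q)) (ω' : Ω),
      (⟪u ω', Y ω'⟫ : ℝ) = ∑ i, Y ω' i * u ω' i := by
    intro u ω'
    simp [PiLp.inner_apply, RCLike.inner_apply, mul_comm]
  calc ∫ ω, ⟪f ω, Y ω⟫ ∂P = ∫ ω, ∑ i, Y ω i * f ω i ∂P :=
        integral_congr_ae (Filter.Eventually.of_forall fun ω => expand f ω)
    _ = ∑ i, ∫ ω, Y ω i * f ω i ∂P := integral_finset_sum _ fun i _ => prodint f hf i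
    _ = ∑ i, ∫ ω, Y ω i * g ω i ∂P := Finset.sum_congr rfl fun i _ => key i
    _ = ∫ ω, ∑ i, Y ω i * g ω i ∂P := (integral_finset_sum _ fun i _ => prodint g hg i).symm
    _ = ∫ ω, ⟪g ω, Y ω⟫ ∂P :=
        integral_congr_ae (Filter.Eventually.of_forall fun ω => (expand g ω).symm)

lemma scsg_arith (G V lam mu M K d : ℝ) (hmu : mu ≠ 0) (hlam : lam ≠ 0) (hM : M ≠ 0)
    (hd : d ≠ 0) :
    (1/M) * ((2/mu*G + M*(lam^2*K*G + (2*lam/mu+4*lam^2)*V)) / (lam*d))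
    = (2/(mu*d*lam*M) + K*lam/d)*G + (2/mu+4*lam)/d*V := by
  field_simp
  ring

lemma norm_sq_add_le {E : Type*} [NormedAddCommGroup E] (u v : E) :
    ‖u + v‖ ^ 2 ≤ 2 * ‖u‖ ^ 2 + 2 * ‖v‖ ^ 2 := by
  have h := norm_add_le u v
  have h2 := pow_le_pow_left₀ (norm_nonneg (u + v)) h 2
  nlinarith [sq_nonneg (‖u‖ - ‖v‖)]

lemma norm_sq_sub_le {E : Type*} [NormedAddCommGroup E] (u v : E) :
    ‖u - v‖ ^ 2 ≤ 2 * ‖u‖ ^ 2 + 2 * ‖v‖ ^ 2 := by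
  have h := norm_sq_add_le u (-v)
  simpa [sub_eq_add_neg] using h

lemma young_div (a b m : ℝ) (hm : 0 < m) : a * b ≤ 1 / m * a ^ 2 + 1 / 2 * (m / 2 * b ^ 2) := by
  rw [← sub_nonneg]
  have h4 : 1 / m * a ^ 2 + 1 / 2 * (m / 2 * b ^ 2) - a * b = (a - m / 2 * b) ^ 2 / m := by
    field_simp
    ring
  rw [h4]
  positivity

/-- (Convergence of Simulated SCSG to an ε-neighborhood.) As in the
Simulated SVRG setting, but the reference gradient is the batch-averaged MLMC estimator
`htil s` (measurable with respect to the epoch-initial σ-algebra, unbiased for `∇F(xt s)`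
given the reference point, and with variance `E‖htil s − ∇F(xt s)‖² ≤ Vh`). If
`α = 2/(μ(1 − (8/μ)C_D λ)λM) + ((8/μ)C_D + 8L)λ/(1 − (8/μ)C_D λ) < 1` and `K, B` are large
enough that `(4(λ + 1/(2μ))/(1 − (8/μ)C_D λ)) Vh < ε`, then
`E[F(xt s) − F(x⋆)] ≤ α^s (F(x0) − F(x⋆)) + ε/(1 − α)`. -/
theorem simulated_scsg_convergence
    {q : ℕ} {Ω : Type*} [mΩ : MeasurableSpace Ω] (P : Measure Ω) [IsProbabilityMeasure P]
    (F : EuclideanSpace ℝ (Fin q) → ℝ)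
    (gradF : EuclideanSpace ℝ (Fin q) → EuclideanSpace ℝ (Fin q))
    (hgrad : ∀ x, HasGradientAt F (gradF x) x)
    (D : Set (EuclideanSpace ℝ (Fin q))) (hDcpt : IsCompact D)
    (μ L CD : ℝ) (hμ : 0 < μ) (hL : 0 < L) (hCD : 0 < CD)
    (xstar : EuclideanSpace ℝ (Fin q)) (hstarD : xstar ∈ D) (hmin : ∀ y, F xstar ≤ F y)
    (hsc : ∀ x ∈ D, ∀ y ∈ D, F x + ⟪gradF x, y - x⟫ + μ / 2 * ‖y - x‖ ^ 2 ≤ F y)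
    (hsm : ∀ x ∈ D, ‖gradF x‖ ^ 2 ≤ 2 * L * (F x - F xstar))
    (M : ℕ) (hM : 1 ≤ M) (lam : ℝ) (hlam : 0 < lam)
    (hden : 0 < 1 - 8 / μ * CD * lam)
    (α ε : ℝ) (hε : 0 < ε)
    (hα : α = 2 / (μ * (1 - 8 / μ * CD * lam) * lam * M)
        + (8 / μ * CD + 8 * L) * lam / (1 - 8 / μ * CD * lam))
    (hα1 : α < 1)
    -- the variance of the batch-averaged reference gradient is small enough
    (Vh : ℝ)
    (hVeps : 4 * (lam + 1 / (2 * μ)) / (1 - 8 / μ * CD * lam) * Vh < ε)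
    -- the algorithm
    (x0 : EuclideanSpace ℝ (Fin q)) (hx0D : x0 ∈ D)
    (xt : ℕ → Ω → EuclideanSpace ℝ (Fin q))
    (htil : ℕ → Ω → EuclideanSpace ℝ (Fin q))
    (X ν Wd : ℕ → ℕ → Ω → EuclideanSpace ℝ (Fin q))
    (𝓕 : ℕ → ℕ → MeasurableSpace Ω)
    (hle : ∀ s t, 𝓕 s t ≤ mΩ) (hmono : ∀ s, Monotone (𝓕 s))
    (hXmeas : ∀ s t, StronglyMeasurable[𝓕 s t] (X s t))
    (hrefmeas : ∀ s, StronglyMeasurable[𝓕 s 0] (xt s))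
    (hhmeas : ∀ s, StronglyMeasurable[𝓕 s 0] (htil s))
    (hx0 : ∀ ω, xt 0 ω = x0)
    (hstart : ∀ s ω, X s 0 ω = xt s ω)
    (hupdate : ∀ s t ω, X s (t + 1) ω = X s t ω - lam • ν s (t + 1) ω)
    (hν : ∀ s t ω, ν s (t + 1) ω = Wd s (t + 1) ω + htil s ω)
    (hinD : ∀ s t ω, X s t ω ∈ D) (hrefD : ∀ s ω, xt s ω ∈ D)
    (hWdint : ∀ s t, Integrable (Wd s (t + 1)) P)
    (hWdsq : ∀ s t, Integrable (fun ω => ‖Wd s (t + 1) ω‖ ^ 2) P)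
    (hhint : ∀ s, Integrable (htil s) P)
    (hhsq : ∀ s, Integrable (fun ω => ‖htil s ω‖ ^ 2) P)
    (hFint : ∀ s, Integrable (fun ω => F (xt s ω)) P)
    (hFXint : ∀ s t, Integrable (fun ω => F (X s t ω)) P)
    -- the reference gradient is unbiased given the reference point, with variance ≤ Vh
    (hunbiasH : ∀ s, P[htil s | MeasurableSpace.comap (xt s) inferInstance]
        =ᵐ[P] fun ω => gradF (xt s ω))
    (hVh : ∀ s, ∫ ω, ‖htil s ω - gradF (xt s ω)‖ ^ 2 ∂P ≤ Vh)
    -- unbiasedness and coupling bound for the variance-reduced simulated gradients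
    (hunbias : ∀ s t, P[Wd s (t + 1) | 𝓕 s t]
        =ᵐ[P] fun ω => gradF (X s t ω) - gradF (xt s ω))
    (hcouple : ∀ s t, (P[fun ω => ‖Wd s (t + 1) ω‖ ^ 2 | 𝓕 s t])
        ≤ᵐ[P] fun ω => CD * ‖X s t ω - xt s ω‖ ^ 2)
    -- option II: the epoch output is a uniformly chosen inner iterate
    (hout : ∀ s, ∫ ω, F (xt (s + 1) ω) ∂P
        = (1 / M) * ∑ t ∈ Finset.range M, ∫ ω, F (X s t ω) ∂P) :
    ∀ s : ℕ, ∫ ω, (F (xt s ω) - F xstar) ∂P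
      ≤ α ^ s * (F x0 - F xstar) + ε / (1 - α) := by
  -- ======== basic positivity and setup ========
  have hμ' : (0:ℝ) < μ := hμ
  have hMpos : (0:ℝ) < (M:ℝ) := by exact_mod_cast Nat.lt_of_lt_of_le Nat.zero_lt_one hM
  have hco : 0 < lam * (1 - 8 / μ * CD * lam) := mul_pos hlam hden
  -- gradient vanishes at the minimizer
  have hgstar : gradF xstar = 0 := by
    have h0 : IsLocalMin F xstar := Filter.Eventually.of_forall fun y => hmin y
    have h1 := h0.hasFDerivAt_eq_zero (hgrad xstar).hasFDerivAt
    exact (InnerProductSpace.toDual ℝ _).injective (h1.trans (map_zero _).symm)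
  -- quadratic growth
  have hqgrow : ∀ y ∈ D, μ / 2 * ‖y - xstar‖ ^ 2 ≤ F y - F xstar := by
    intro y hy
    have h := hsc xstar hstarD y hy
    rw [hgstar] at h
    simp only [inner_zero_left] at h
    linarith
  -- lower bound on the inner product with the gradient
  have hlower : ∀ x ∈ D, F x - F xstar + μ / 2 * ‖x - xstar‖ ^ 2 ≤ ⟪gradF x, x - xstar⟫ := by
    intro x hx
    have h := hsc x hx xstar hstarD
    have h2 : ⟪gradF x, xstar - x⟫ = -⟪gradF x, x - xstar⟫ := by
      rw [← inner_neg_right]; congr 1; abel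
    have h3 : ‖xstar - x‖ = ‖x - xstar‖ := norm_sub_rev _ _
    rw [h2, h3] at h
    linarith
  -- bounds on D
  obtain ⟨R, hR⟩ := hDcpt.isBounded.exists_norm_le
  set R2 : ℝ := R + ‖xstar‖ with hR2def
  have hR2 : ∀ x ∈ D, ‖x - xstar‖ ≤ R2 := fun x hx =>
    (norm_sub_le _ _).trans (add_le_add_left (hR x hx) _)
  have hR2nn : 0 ≤ R2 := le_trans (norm_nonneg _) (hR2 xstar hstarD)
  have hFcont : Continuous F := continuous_iff_continuousAt.2
    fun x => (hgrad x).differentiableAt.continuousAt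
  obtain ⟨z, hzD, hz⟩ := hDcpt.exists_isMaxOn ⟨xstar, hstarD⟩ hFcont.continuousOn
  have hFB : ∀ x ∈ D, F x - F xstar ≤ F z - F xstar := fun x hx => by
    have := hz hx; simp only [Set.mem_setOf_eq] at this; linarith
  set G0 : ℝ := Real.sqrt (2 * L * (F z - F xstar)) with hG0def
  have hG0nn : 0 ≤ G0 := Real.sqrt_nonneg _
  have hG0 : ∀ x ∈ D, ‖gradF x‖ ≤ G0 := by
    intro x hx
    have h1 : ‖gradF x‖ ^ 2 ≤ 2 * L * (F z - F xstar) := by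
      have := hsm x hx
      have := hFB x hx
      nlinarith
    calc ‖gradF x‖ = Real.sqrt (‖gradF x‖ ^ 2) := by
          rw [Real.sqrt_sq (norm_nonneg _)]
      _ ≤ G0 := Real.sqrt_le_sqrt h1
  -- measurability of the gradient map
  have mgrad : Measurable gradF := by
    have heq : gradF = fun x => (InnerProductSpace.toDual ℝ _).symm (fderiv ℝ F x) := by
      funext x
      have h1 : HasFDerivAt F ((InnerProductSpace.toDual ℝ _) (gradF x)) x :=
        (hgrad x).hasFDerivAt
      rw [h1.fderiv]
      simp
    rw [heq]
    exact ((InnerProductSpace.toDual ℝ _).symm.continuous.measurable).comp (measurable_fderiv ℝ F)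
  -- measurability facts
  have smX : ∀ s t, StronglyMeasurable (X s t) := fun s t => (hXmeas s t).mono (hle s t)
  have smxt : ∀ s, StronglyMeasurable (xt s) := fun s => (hrefmeas s).mono (hle s 0)
  have smh : ∀ s, StronglyMeasurable (htil s) := fun s => (hhmeas s).mono (hle s 0)
  have smgX : ∀ s t, StronglyMeasurable fun ω => gradF (X s t ω) := fun s t =>
    (mgrad.comp (smX s t).measurable).stronglyMeasurable
  have smgxt : ∀ s, StronglyMeasurable fun ω => gradF (xt s ω) := fun s =>
    (mgrad.comp (smxt s).measurable).stronglyMeasurable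
  -- integrability of bounded measurable functions
  have intB : ∀ (f : Ω → ℝ) (C : ℝ), AEStronglyMeasurable f P → (∀ ω, |f ω| ≤ C) →
      Integrable f P := fun f C hmeas hb =>
    Integrable.mono' (integrable_const C) hmeas
      (Filter.Eventually.of_forall fun ω => by simpa [Real.norm_eq_abs] using hb ω)
  have intgX : ∀ s t, Integrable (fun ω => gradF (X s t ω)) P := by
    intro s t
    refine Integrable.mono' (integrable_const G0) (aesm_of_sm (smgX s t) P)
      (Filter.Eventually.of_forall fun ω => hG0 _ (hinD s t ω))
  have intgxt : ∀ s, Integrable (fun ω => gradF (xt s ω)) P := by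
    intro s
    refine Integrable.mono' (integrable_const G0) (aesm_of_sm (smgxt s) P)
      (Filter.Eventually.of_forall fun ω => hG0 _ (hrefD s ω))
  -- ======== the one-epoch recursion ========
  set epsP : ℝ := 4 * (lam + 1 / (2 * μ)) / (1 - 8 / μ * CD * lam) * Vh with hepsPdef
  have key : ∀ s, ∫ ω, (F (xt (s+1) ω) - F xstar) ∂P
      ≤ α * ∫ ω, (F (xt s ω) - F xstar) ∂P + epsP := by
    intro s
    set G : ℝ := ∫ ω, (F (xt s ω) - F xstar) ∂P with hGdef
    set V : ℝ := ∫ ω, ‖htil s ω - gradF (xt s ω)‖ ^ 2 ∂P with hVdef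
    -- quadratic growth, divided form
    have hq2 : ∀ y ∈ D, ‖y - xstar‖ ^ 2 ≤ 2 / μ * (F y - F xstar) := by
      intro y hy
      have h0 : 2 / μ * (μ / 2) = 1 := by field_simp
      have h2 : ‖y - xstar‖ ^ 2 = 2 / μ * (μ / 2 * ‖y - xstar‖ ^ 2) := by
        rw [← mul_assoc, h0, one_mul]
      rw [h2]
      exact mul_le_mul_of_nonneg_left (hqgrow y hy) (by positivity)
    -- measurability of inner products
    have aeInner : ∀ (f g : Ω → EuclideanSpace ℝ (Fin q)), AEStronglyMeasurable f P →
        AEStronglyMeasurable g P → AEStronglyMeasurable (fun ω => (⟪f ω, g ω⟫ : ℝ)) P :=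
      fun f g hf hg => (hf.aemeasurable.inner hg.aemeasurable).aestronglyMeasurable
    -- integrability
    have intFa : ∀ t, Integrable (fun ω => F (X s t ω) - F xstar) P := fun t =>
      (hFXint s t).sub (integrable_const _)
    have intFG : Integrable (fun ω => F (xt s ω) - F xstar) P :=
      (hFint s).sub (integrable_const _)
    have intYd2 : ∀ t, Integrable (fun ω => ‖X s t ω - xstar‖ ^ 2) P := by
      intro t
      refine intB _ (R2 ^ 2)
        (aesm_of_sm (((smX s t).sub stronglyMeasurable_const).norm.pow 2) P) (fun ω => ?_)
      have h1 := hR2 _ (hinD s t ω)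
      rw [abs_of_nonneg (by positivity)]
      exact pow_le_pow_left₀ (norm_nonneg _) h1 2
    have intxt2 : Integrable (fun ω => ‖xt s ω - xstar‖ ^ 2) P := by
      refine intB _ (R2 ^ 2)
        (aesm_of_sm (((smxt s).sub stronglyMeasurable_const).norm.pow 2) P) (fun ω => ?_)
      have h1 := hR2 _ (hrefD s ω)
      rw [abs_of_nonneg (by positivity)]
      exact pow_le_pow_left₀ (norm_nonneg _) h1 2
    have intXxt2 : ∀ t, Integrable (fun ω => ‖X s t ω - xt s ω‖ ^ 2) P := by
      intro t
      refine intB _ ((2 * R2) ^ 2)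
        (aesm_of_sm (((smX s t).sub (smxt s)).norm.pow 2) P) (fun ω => ?_)
      have htri : ‖X s t ω - xt s ω‖ ≤ ‖X s t ω - xstar‖ + ‖xt s ω - xstar‖ := by
        have h0 : X s t ω - xt s ω = (X s t ω - xstar) - (xt s ω - xstar) := by abel
        rw [h0]; exact norm_sub_le _ _
      have h1 := hR2 _ (hinD s t ω)
      have h2 := hR2 _ (hrefD s ω)
      have h3 : ‖X s t ω - xt s ω‖ ≤ 2 * R2 := by linarith
      rw [abs_of_nonneg (by positivity)]
      exact pow_le_pow_left₀ (norm_nonneg _) h3 2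
    have intE2 : Integrable (fun ω => ‖htil s ω - gradF (xt s ω)‖ ^ 2) P := by
      refine Integrable.mono' (((hhsq s).const_mul 2).add (integrable_const (2 * G0 ^ 2)))
        (aesm_of_sm (((smh s).sub (smgxt s)).norm.pow 2) P)
        (Filter.Eventually.of_forall fun ω => ?_)
      have h1 := norm_sq_sub_le (htil s ω) (gradF (xt s ω))
      have h2 := pow_le_pow_left₀ (norm_nonneg (gradF (xt s ω))) (hG0 _ (hrefD s ω)) 2
      simp only [Pi.add_apply]
      rw [Real.norm_eq_abs, abs_of_nonneg (by positivity)]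
      linarith
    have intWY : ∀ t, Integrable (fun ω => ⟪Wd s (t+1) ω, X s t ω - xstar⟫) P := by
      intro t
      refine Integrable.mono' ((hWdint s t).norm.const_mul R2)
        (aeInner _ _ (hWdint s t).1
          (aesm_of_sm ((smX s t).sub stronglyMeasurable_const) P))
        (Filter.Eventually.of_forall fun ω => ?_)
      have h1 := (abs_real_inner_le_norm (Wd s (t+1) ω) (X s t ω - xstar))
      have h2 := hR2 _ (hinD s t ω)
      rw [Real.norm_eq_abs]
      calc |⟪Wd s (t+1) ω, X s t ω - xstar⟫| ≤ ‖Wd s (t+1) ω‖ * ‖X s t ω - xstar‖ := h1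
        _ ≤ ‖Wd s (t+1) ω‖ * R2 := mul_le_mul_of_nonneg_left h2 (norm_nonneg _)
        _ = R2 * ‖Wd s (t+1) ω‖ := mul_comm _ _
    have inthY : ∀ t, Integrable (fun ω => ⟪htil s ω, X s t ω - xstar⟫) P := by
      intro t
      refine Integrable.mono' ((hhint s).norm.const_mul R2)
        (aeInner _ _ (hhint s).1
          (aesm_of_sm ((smX s t).sub stronglyMeasurable_const) P))
        (Filter.Eventually.of_forall fun ω => ?_)
      have h1 := (abs_real_inner_le_norm (htil s ω) (X s t ω - xstar))
      have h2 := hR2 _ (hinD s t ω)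
      rw [Real.norm_eq_abs]
      calc |⟪htil s ω, X s t ω - xstar⟫| ≤ ‖htil s ω‖ * ‖X s t ω - xstar‖ := h1
        _ ≤ ‖htil s ω‖ * R2 := mul_le_mul_of_nonneg_left h2 (norm_nonneg _)
        _ = R2 * ‖htil s ω‖ := mul_comm _ _
    have intgXY : ∀ t, Integrable (fun ω => ⟪gradF (X s t ω), X s t ω - xstar⟫) P := by
      intro t
      refine intB _ (G0 * R2)
        (aeInner _ _ (aesm_of_sm (smgX s t) P)
          (aesm_of_sm ((smX s t).sub stronglyMeasurable_const) P)) (fun ω => ?_)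
      have h1 := (abs_real_inner_le_norm (gradF (X s t ω)) (X s t ω - xstar))
      have h2 := hR2 _ (hinD s t ω)
      have h3 := hG0 _ (hinD s t ω)
      calc |⟪gradF (X s t ω), X s t ω - xstar⟫|
          ≤ ‖gradF (X s t ω)‖ * ‖X s t ω - xstar‖ := h1
        _ ≤ G0 * R2 := mul_le_mul h3 h2 (norm_nonneg _) hG0nn
    have intgRY : ∀ t, Integrable (fun ω => ⟪gradF (xt s ω), X s t ω - xstar⟫) P := by
      intro t
      refine intB _ (G0 * R2)
        (aeInner _ _ (aesm_of_sm (smgxt s) P)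
          (aesm_of_sm ((smX s t).sub stronglyMeasurable_const) P)) (fun ω => ?_)
      have h1 := (abs_real_inner_le_norm (gradF (xt s ω)) (X s t ω - xstar))
      have h2 := hR2 _ (hinD s t ω)
      have h3 := hG0 _ (hrefD s ω)
      calc |⟪gradF (xt s ω), X s t ω - xstar⟫|
          ≤ ‖gradF (xt s ω)‖ * ‖X s t ω - xstar‖ := h1
        _ ≤ G0 * R2 := mul_le_mul h3 h2 (norm_nonneg _) hG0nn
    have inteY : ∀ t, Integrable (fun ω => ⟪htil s ω - gradF (xt s ω), X s t ω - xstar⟫) P := by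
      intro t
      have heq : (fun ω => (⟪htil s ω - gradF (xt s ω), X s t ω - xstar⟫ : ℝ))
          = fun ω => ⟪htil s ω, X s t ω - xstar⟫ - ⟪gradF (xt s ω), X s t ω - xstar⟫ := by
        funext ω; rw [inner_sub_left]
      rw [heq]
      exact (inthY t).sub (intgRY t)
    have intgXgRY : ∀ t, Integrable
        (fun ω => ⟪gradF (X s t ω) - gradF (xt s ω), X s t ω - xstar⟫) P := by
      intro t
      have heq : (fun ω => (⟪gradF (X s t ω) - gradF (xt s ω), X s t ω - xstar⟫ : ℝ))
          = fun ω => ⟪gradF (X s t ω), X s t ω - xstar⟫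
            - ⟪gradF (xt s ω), X s t ω - xstar⟫ := by
        funext ω; rw [inner_sub_left]
      rw [heq]
      exact (intgXY t).sub (intgRY t)
    have intN2 : ∀ t, Integrable (fun ω => ‖Wd s (t+1) ω + htil s ω‖ ^ 2) P := by
      intro t
      refine Integrable.mono' (((hWdsq s t).const_mul 2).add ((hhsq s).const_mul 2))
        (((hWdint s t).1.add (hhint s).1).norm.pow 2)
        (Filter.Eventually.of_forall fun ω => ?_)
      have h1 := norm_sq_add_le (Wd s (t+1) ω) (htil s ω)
      simp only [Pi.add_apply]
      rw [Real.norm_eq_abs, abs_of_nonneg (by positivity)]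
      linarith
    -- ===== the per-step inequality =====
    have step : ∀ t, ∫ ω, ‖X s (t+1) ω - xstar‖ ^ 2 ∂P
        ≤ ∫ ω, ‖X s t ω - xstar‖ ^ 2 ∂P
          - lam * (1 - 8 / μ * CD * lam) * ∫ ω, (F (X s t ω) - F xstar) ∂P
          + lam ^ 2 * (8 / μ * CD + 8 * L) * G + (2 * lam / μ + 4 * lam ^ 2) * V := by
      intro t
      -- pointwise expansion of the squared distance
      have pe : ∀ ω, ‖X s (t+1) ω - xstar‖ ^ 2
          = ‖X s t ω - xstar‖ ^ 2
            - 2 * lam * ⟪Wd s (t+1) ω, X s t ω - xstar⟫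
            - 2 * lam * ⟪htil s ω, X s t ω - xstar⟫
            + lam ^ 2 * ‖Wd s (t+1) ω + htil s ω‖ ^ 2 := by
        intro ω
        have h1 : X s (t+1) ω - xstar
            = (X s t ω - xstar) - lam • (Wd s (t+1) ω + htil s ω) := by
          rw [hupdate s t ω, hν s t ω]; abel
        rw [h1, norm_sub_sq_real, real_inner_smul_right, inner_add_right, norm_smul,
          Real.norm_eq_abs, abs_of_pos hlam, mul_pow,
          real_inner_comm (X s t ω - xstar) (Wd s (t+1) ω),
          real_inner_comm (X s t ω - xstar) (htil s ω)]
        ring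
      -- integrate the expansion
      have ib : ∫ ω, ‖X s (t+1) ω - xstar‖ ^ 2 ∂P
          = ∫ ω, ‖X s t ω - xstar‖ ^ 2 ∂P
            - 2 * lam * ∫ ω, ⟪Wd s (t+1) ω, X s t ω - xstar⟫ ∂P
            - 2 * lam * ∫ ω, ⟪htil s ω, X s t ω - xstar⟫ ∂P
            + lam ^ 2 * ∫ ω, ‖Wd s (t+1) ω + htil s ω‖ ^ 2 ∂P := by
        have e1 : ∫ ω, ‖X s (t+1) ω - xstar‖ ^ 2 ∂P
            = ∫ ω, (‖X s t ω - xstar‖ ^ 2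
              - 2 * lam * ⟪Wd s (t+1) ω, X s t ω - xstar⟫
              - 2 * lam * ⟪htil s ω, X s t ω - xstar⟫
              + lam ^ 2 * ‖Wd s (t+1) ω + htil s ω‖ ^ 2) ∂P :=
          integral_congr_ae (Filter.Eventually.of_forall pe)
        have hI2 : Integrable (fun ω => 2 * lam * ⟪Wd s (t+1) ω, X s t ω - xstar⟫) P :=
          (intWY t).const_mul _
        have hI3 : Integrable (fun ω => 2 * lam * ⟪htil s ω, X s t ω - xstar⟫) P :=
          (inthY t).const_mul _
        have hI4 : Integrable (fun ω => lam ^ 2 * ‖Wd s (t+1) ω + htil s ω‖ ^ 2) P :=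
          (intN2 t).const_mul _
        have e2 : ∫ ω, (‖X s t ω - xstar‖ ^ 2
              - 2 * lam * ⟪Wd s (t+1) ω, X s t ω - xstar⟫
              - 2 * lam * ⟪htil s ω, X s t ω - xstar⟫
              + lam ^ 2 * ‖Wd s (t+1) ω + htil s ω‖ ^ 2) ∂P
            = (∫ ω, (‖X s t ω - xstar‖ ^ 2
              - 2 * lam * ⟪Wd s (t+1) ω, X s t ω - xstar⟫
              - 2 * lam * ⟪htil s ω, X s t ω - xstar⟫) ∂P)
              + ∫ ω, lam ^ 2 * ‖Wd s (t+1) ω + htil s ω‖ ^ 2 ∂P :=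
          integral_add (((intYd2 t).sub hI2).sub hI3) hI4
        have e3 : ∫ ω, (‖X s t ω - xstar‖ ^ 2
              - 2 * lam * ⟪Wd s (t+1) ω, X s t ω - xstar⟫
              - 2 * lam * ⟪htil s ω, X s t ω - xstar⟫) ∂P
            = (∫ ω, (‖X s t ω - xstar‖ ^ 2
              - 2 * lam * ⟪Wd s (t+1) ω, X s t ω - xstar⟫) ∂P)
              - ∫ ω, 2 * lam * ⟪htil s ω, X s t ω - xstar⟫ ∂P :=
          integral_sub ((intYd2 t).sub hI2) hI3
        have e4 : ∫ ω, (‖X s t ω - xstar‖ ^ 2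
              - 2 * lam * ⟪Wd s (t+1) ω, X s t ω - xstar⟫) ∂P
            = (∫ ω, ‖X s t ω - xstar‖ ^ 2 ∂P)
              - ∫ ω, 2 * lam * ⟪Wd s (t+1) ω, X s t ω - xstar⟫ ∂P :=
          integral_sub (intYd2 t) hI2
        have e5 : ∫ ω, 2 * lam * ⟪Wd s (t+1) ω, X s t ω - xstar⟫ ∂P
            = 2 * lam * ∫ ω, ⟪Wd s (t+1) ω, X s t ω - xstar⟫ ∂P := integral_const_mul _ _
        have e6 : ∫ ω, 2 * lam * ⟪htil s ω, X s t ω - xstar⟫ ∂P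
            = 2 * lam * ∫ ω, ⟪htil s ω, X s t ω - xstar⟫ ∂P := integral_const_mul _ _
        have e7 : ∫ ω, lam ^ 2 * ‖Wd s (t+1) ω + htil s ω‖ ^ 2 ∂P
            = lam ^ 2 * ∫ ω, ‖Wd s (t+1) ω + htil s ω‖ ^ 2 ∂P := integral_const_mul _ _
        rw [e1, e2, e3, e4, e5, e6, e7]
      -- replace the Wd-inner integral using the conditional expectation
      have iW : ∫ ω, ⟪Wd s (t+1) ω, X s t ω - xstar⟫ ∂P
          = ∫ ω, ⟪gradF (X s t ω) - gradF (xt s ω), X s t ω - xstar⟫ ∂P := by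
        refine integral_inner_of_condexp P (hle s t) (Wd s (t+1))
          (fun ω => gradF (X s t ω) - gradF (xt s ω)) (fun ω => X s t ω - xstar)
          (hWdint s t) ((intgX s t).sub (intgxt s)) (hunbias s t)
          ((hXmeas s t).sub stronglyMeasurable_const) R2 (fun ω => hR2 _ (hinD s t ω))
      -- split the htil-inner integral
      have iH : ∫ ω, ⟪htil s ω, X s t ω - xstar⟫ ∂P
          = ∫ ω, ⟪htil s ω - gradF (xt s ω), X s t ω - xstar⟫ ∂P
            + ∫ ω, ⟪gradF (xt s ω), X s t ω - xstar⟫ ∂P := by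
        rw [← integral_add (inteY t) (intgRY t)]
        refine integral_congr_ae (Filter.Eventually.of_forall fun ω => ?_)
        dsimp only
        rw [inner_sub_left]; ring
      -- recombine the gradient terms
      have iSum : ∫ ω, ⟪Wd s (t+1) ω, X s t ω - xstar⟫ ∂P
            + ∫ ω, ⟪htil s ω, X s t ω - xstar⟫ ∂P
          = ∫ ω, ⟪gradF (X s t ω), X s t ω - xstar⟫ ∂P
            + ∫ ω, ⟪htil s ω - gradF (xt s ω), X s t ω - xstar⟫ ∂P := by
        rw [iW, iH]
        have h5 : ∫ ω, ⟪gradF (X s t ω) - gradF (xt s ω), X s t ω - xstar⟫ ∂P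
            + ∫ ω, ⟪gradF (xt s ω), X s t ω - xstar⟫ ∂P
            = ∫ ω, ⟪gradF (X s t ω), X s t ω - xstar⟫ ∂P := by
          rw [← integral_add (intgXgRY t) (intgRY t)]
          refine integral_congr_ae (Filter.Eventually.of_forall fun ω => ?_)
          dsimp only
          rw [inner_sub_left]; ring
        linarith
      -- bound: gradient inner product from below
      have hgXlb : ∫ ω, (F (X s t ω) - F xstar) ∂P
          ≤ ∫ ω, ⟪gradF (X s t ω), X s t ω - xstar⟫ ∂P := by
        refine integral_mono (intFa t) (intgXY t) (fun ω => ?_)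
        have h1 := hlower _ (hinD s t ω)
        have h2 : 0 ≤ μ / 2 * ‖X s t ω - xstar‖ ^ 2 := by positivity
        dsimp only
        linarith
      -- bound: error inner product
      have heb : -(∫ ω, ⟪htil s ω - gradF (xt s ω), X s t ω - xstar⟫ ∂P)
          ≤ 1 / μ * V + 1 / 2 * ∫ ω, (F (X s t ω) - F xstar) ∂P := by
        have h1 : ∫ ω, -⟪htil s ω - gradF (xt s ω), X s t ω - xstar⟫ ∂P
            ≤ ∫ ω, (1 / μ * ‖htil s ω - gradF (xt s ω)‖ ^ 2
              + 1 / 2 * (F (X s t ω) - F xstar)) ∂P := by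
          refine integral_mono (inteY t).neg ((intE2.const_mul _).add ((intFa t).const_mul _))
            (fun ω => ?_)
          dsimp only
          have p1 : -⟪htil s ω - gradF (xt s ω), X s t ω - xstar⟫
              ≤ ‖htil s ω - gradF (xt s ω)‖ * ‖X s t ω - xstar‖ :=
            le_trans (neg_le_abs _) (abs_real_inner_le_norm _ _)
          have p3 := young_div ‖htil s ω - gradF (xt s ω)‖ ‖X s t ω - xstar‖ μ hμ'
          have p2 := hqgrow _ (hinD s t ω)
          linarith
        have eneg : ∫ ω, -⟪htil s ω - gradF (xt s ω), X s t ω - xstar⟫ ∂P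
            = -∫ ω, ⟪htil s ω - gradF (xt s ω), X s t ω - xstar⟫ ∂P := integral_neg _
        have esp : ∫ ω, (1 / μ * ‖htil s ω - gradF (xt s ω)‖ ^ 2
              + 1 / 2 * (F (X s t ω) - F xstar)) ∂P
            = (∫ ω, 1 / μ * ‖htil s ω - gradF (xt s ω)‖ ^ 2 ∂P)
              + ∫ ω, 1 / 2 * (F (X s t ω) - F xstar) ∂P :=
          integral_add (intE2.const_mul _) ((intFa t).const_mul _)
        have em1 : ∫ ω, 1 / μ * ‖htil s ω - gradF (xt s ω)‖ ^ 2 ∂P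
            = 1 / μ * ∫ ω, ‖htil s ω - gradF (xt s ω)‖ ^ 2 ∂P := integral_const_mul _ _
        have em2 : ∫ ω, 1 / 2 * (F (X s t ω) - F xstar) ∂P
            = 1 / 2 * ∫ ω, (F (X s t ω) - F xstar) ∂P := integral_const_mul _ _
        rw [eneg, esp, em1, em2] at h1
        linarith
      -- bound: the Wd second moment via the coupling property
      have hW1 : ∫ ω, ‖Wd s (t+1) ω‖ ^ 2 ∂P ≤ CD * ∫ ω, ‖X s t ω - xt s ω‖ ^ 2 ∂P := by
        have h1 := integral_condExp (μ := P) (f := fun ω => ‖Wd s (t+1) ω‖ ^ 2) (hle s t)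
        have h2 : ∫ ω, CD * ‖X s t ω - xt s ω‖ ^ 2 ∂P
            = CD * ∫ ω, ‖X s t ω - xt s ω‖ ^ 2 ∂P := integral_const_mul _ _
        rw [← h1, ← h2]
        exact integral_mono_ae integrable_condExp ((intXxt2 t).const_mul _) (hcouple s t)
      have hXxt : ∫ ω, ‖X s t ω - xt s ω‖ ^ 2 ∂P
          ≤ 4 / μ * ∫ ω, (F (X s t ω) - F xstar) ∂P + 4 / μ * G := by
        have h1 : ∫ ω, ‖X s t ω - xt s ω‖ ^ 2 ∂P
            ≤ ∫ ω, (4 / μ * (F (X s t ω) - F xstar) + 4 / μ * (F (xt s ω) - F xstar)) ∂P := by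
          refine integral_mono (intXxt2 t) (((intFa t).const_mul _).add (intFG.const_mul _))
            (fun ω => ?_)
          dsimp only
          have h3 := hq2 _ (hinD s t ω)
          have h4 := hq2 _ (hrefD s ω)
          have h5 : ‖X s t ω - xt s ω‖ ^ 2
              ≤ 2 * ‖X s t ω - xstar‖ ^ 2 + 2 * ‖xt s ω - xstar‖ ^ 2 := by
            have h0 : X s t ω - xt s ω = (X s t ω - xstar) - (xt s ω - xstar) := by abel
            rw [h0]
            exact norm_sq_sub_le _ _
          calc ‖X s t ω - xt s ω‖ ^ 2
              ≤ 2 * ‖X s t ω - xstar‖ ^ 2 + 2 * ‖xt s ω - xstar‖ ^ 2 := h5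
            _ ≤ 2 * (2 / μ * (F (X s t ω) - F xstar))
                + 2 * (2 / μ * (F (xt s ω) - F xstar)) := by linarith
            _ = 4 / μ * (F (X s t ω) - F xstar) + 4 / μ * (F (xt s ω) - F xstar) := by ring
        have esp : ∫ ω, (4 / μ * (F (X s t ω) - F xstar) + 4 / μ * (F (xt s ω) - F xstar)) ∂P
            = (∫ ω, 4 / μ * (F (X s t ω) - F xstar) ∂P)
              + ∫ ω, 4 / μ * (F (xt s ω) - F xstar) ∂P :=
          integral_add ((intFa t).const_mul _) (intFG.const_mul _)
        have em1 : ∫ ω, 4 / μ * (F (X s t ω) - F xstar) ∂P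
            = 4 / μ * ∫ ω, (F (X s t ω) - F xstar) ∂P := integral_const_mul _ _
        have em2 : ∫ ω, 4 / μ * (F (xt s ω) - F xstar) ∂P
            = 4 / μ * ∫ ω, (F (xt s ω) - F xstar) ∂P := integral_const_mul _ _
        rw [esp, em1, em2] at h1
        exact h1
      -- bound: the htil second moment
      have hHn : ∫ ω, ‖htil s ω‖ ^ 2 ∂P ≤ 4 * L * G + 2 * V := by
        have h1 : ∫ ω, ‖htil s ω‖ ^ 2 ∂P
            ≤ ∫ ω, (4 * L * (F (xt s ω) - F xstar)
              + 2 * ‖htil s ω - gradF (xt s ω)‖ ^ 2) ∂P := by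
          refine integral_mono (hhsq s) ((intFG.const_mul _).add (intE2.const_mul _))
            (fun ω => ?_)
          dsimp only
          have h4 := hsm _ (hrefD s ω)
          have h5 : ‖htil s ω‖ ^ 2
              ≤ 2 * ‖gradF (xt s ω)‖ ^ 2 + 2 * ‖htil s ω - gradF (xt s ω)‖ ^ 2 := by
            have h0 : htil s ω = gradF (xt s ω) + (htil s ω - gradF (xt s ω)) := by abel
            calc ‖htil s ω‖ ^ 2
                = ‖gradF (xt s ω) + (htil s ω - gradF (xt s ω))‖ ^ 2 := by rw [← h0]
              _ ≤ _ := norm_sq_add_le _ _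
          calc ‖htil s ω‖ ^ 2
              ≤ 2 * ‖gradF (xt s ω)‖ ^ 2 + 2 * ‖htil s ω - gradF (xt s ω)‖ ^ 2 := h5
            _ ≤ 2 * (2 * L * (F (xt s ω) - F xstar))
                + 2 * ‖htil s ω - gradF (xt s ω)‖ ^ 2 := by linarith
            _ = 4 * L * (F (xt s ω) - F xstar) + 2 * ‖htil s ω - gradF (xt s ω)‖ ^ 2 := by ring
        have esp : ∫ ω, (4 * L * (F (xt s ω) - F xstar)
              + 2 * ‖htil s ω - gradF (xt s ω)‖ ^ 2) ∂P
            = (∫ ω, 4 * L * (F (xt s ω) - F xstar) ∂P)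
              + ∫ ω, 2 * ‖htil s ω - gradF (xt s ω)‖ ^ 2 ∂P :=
          integral_add (intFG.const_mul _) (intE2.const_mul _)
        have em1 : ∫ ω, 4 * L * (F (xt s ω) - F xstar) ∂P
            = 4 * L * ∫ ω, (F (xt s ω) - F xstar) ∂P := integral_const_mul _ _
        have em2 : ∫ ω, 2 * ‖htil s ω - gradF (xt s ω)‖ ^ 2 ∂P
            = 2 * ∫ ω, ‖htil s ω - gradF (xt s ω)‖ ^ 2 ∂P := integral_const_mul _ _
        rw [esp, em1, em2] at h1
        exact h1
      -- bound: second moment of the combined direction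
      have hNn : ∫ ω, ‖Wd s (t+1) ω + htil s ω‖ ^ 2 ∂P
          ≤ 2 * ∫ ω, ‖Wd s (t+1) ω‖ ^ 2 ∂P + 2 * ∫ ω, ‖htil s ω‖ ^ 2 ∂P := by
        have h1 : ∫ ω, ‖Wd s (t+1) ω + htil s ω‖ ^ 2 ∂P
            ≤ ∫ ω, (2 * ‖Wd s (t+1) ω‖ ^ 2 + 2 * ‖htil s ω‖ ^ 2) ∂P := by
          refine integral_mono (intN2 t) (((hWdsq s t).const_mul _).add ((hhsq s).const_mul _))
            (fun ω => ?_)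
          dsimp only
          have h2 := pow_le_pow_left₀ (norm_nonneg (Wd s (t+1) ω + htil s ω))
            (norm_add_le (Wd s (t+1) ω) (htil s ω)) 2
          nlinarith [sq_nonneg (‖Wd s (t+1) ω‖ - ‖htil s ω‖)]
        have esp : ∫ ω, (2 * ‖Wd s (t+1) ω‖ ^ 2 + 2 * ‖htil s ω‖ ^ 2) ∂P
            = (∫ ω, 2 * ‖Wd s (t+1) ω‖ ^ 2 ∂P) + ∫ ω, 2 * ‖htil s ω‖ ^ 2 ∂P :=
          integral_add ((hWdsq s t).const_mul _) ((hhsq s).const_mul _)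
        have em1 : ∫ ω, 2 * ‖Wd s (t+1) ω‖ ^ 2 ∂P
            = 2 * ∫ ω, ‖Wd s (t+1) ω‖ ^ 2 ∂P := integral_const_mul _ _
        have em2 : ∫ ω, 2 * ‖htil s ω‖ ^ 2 ∂P
            = 2 * ∫ ω, ‖htil s ω‖ ^ 2 ∂P := integral_const_mul _ _
        rw [esp, em1, em2] at h1
        exact h1
      -- assemble
      have hWfin : ∫ ω, ‖Wd s (t+1) ω‖ ^ 2 ∂P
          ≤ CD * (4 / μ * ∫ ω, (F (X s t ω) - F xstar) ∂P + 4 / μ * G) :=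
        hW1.trans (mul_le_mul_of_nonneg_left hXxt hCD.le)
      have m1 : -(2 * lam) * (∫ ω, ⟪Wd s (t+1) ω, X s t ω - xstar⟫ ∂P
            + ∫ ω, ⟪htil s ω, X s t ω - xstar⟫ ∂P)
          ≤ -(2 * lam) * ∫ ω, (F (X s t ω) - F xstar) ∂P
            + 2 * lam * (1 / μ * V + 1 / 2 * ∫ ω, (F (X s t ω) - F xstar) ∂P) := by
        rw [iSum]
        have h2 : -(∫ ω, ⟪gradF (X s t ω), X s t ω - xstar⟫ ∂P
              + ∫ ω, ⟪htil s ω - gradF (xt s ω), X s t ω - xstar⟫ ∂P)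
            ≤ -(∫ ω, (F (X s t ω) - F xstar) ∂P)
              + (1 / μ * V + 1 / 2 * ∫ ω, (F (X s t ω) - F xstar) ∂P) := by
          linarith
        have h3 := mul_le_mul_of_nonneg_left h2 (le_of_lt (mul_pos two_pos hlam))
        calc -(2 * lam) * (∫ ω, ⟪gradF (X s t ω), X s t ω - xstar⟫ ∂P
              + ∫ ω, ⟪htil s ω - gradF (xt s ω), X s t ω - xstar⟫ ∂P)
            = 2 * lam * (-(∫ ω, ⟪gradF (X s t ω), X s t ω - xstar⟫ ∂P
              + ∫ ω, ⟪htil s ω - gradF (xt s ω), X s t ω - xstar⟫ ∂P)) := by ring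
          _ ≤ 2 * lam * (-(∫ ω, (F (X s t ω) - F xstar) ∂P)
              + (1 / μ * V + 1 / 2 * ∫ ω, (F (X s t ω) - F xstar) ∂P)) := h3
          _ = -(2 * lam) * ∫ ω, (F (X s t ω) - F xstar) ∂P
              + 2 * lam * (1 / μ * V + 1 / 2 * ∫ ω, (F (X s t ω) - F xstar) ∂P) := by ring
      have m2 : lam ^ 2 * ∫ ω, ‖Wd s (t+1) ω + htil s ω‖ ^ 2 ∂P
          ≤ lam ^ 2 * (2 * (CD * (4 / μ * ∫ ω, (F (X s t ω) - F xstar) ∂P + 4 / μ * G))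
            + 2 * (4 * L * G + 2 * V)) := by
        refine mul_le_mul_of_nonneg_left ?_ (sq_nonneg lam)
        calc ∫ ω, ‖Wd s (t+1) ω + htil s ω‖ ^ 2 ∂P
            ≤ 2 * ∫ ω, ‖Wd s (t+1) ω‖ ^ 2 ∂P + 2 * ∫ ω, ‖htil s ω‖ ^ 2 ∂P := hNn
          _ ≤ _ := by
              have := mul_le_mul_of_nonneg_left hWfin (by norm_num : (0:ℝ) ≤ 2)
              have := mul_le_mul_of_nonneg_left hHn (by norm_num : (0:ℝ) ≤ 2)
              linarith
      rw [ib]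
      calc ∫ ω, ‖X s t ω - xstar‖ ^ 2 ∂P
            - 2 * lam * ∫ ω, ⟪Wd s (t+1) ω, X s t ω - xstar⟫ ∂P
            - 2 * lam * ∫ ω, ⟪htil s ω, X s t ω - xstar⟫ ∂P
            + lam ^ 2 * ∫ ω, ‖Wd s (t+1) ω + htil s ω‖ ^ 2 ∂P
          = ∫ ω, ‖X s t ω - xstar‖ ^ 2 ∂P
            + (-(2 * lam) * (∫ ω, ⟪Wd s (t+1) ω, X s t ω - xstar⟫ ∂P
              + ∫ ω, ⟪htil s ω, X s t ω - xstar⟫ ∂P))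
            + lam ^ 2 * ∫ ω, ‖Wd s (t+1) ω + htil s ω‖ ^ 2 ∂P := by ring
        _ ≤ ∫ ω, ‖X s t ω - xstar‖ ^ 2 ∂P
            + (-(2 * lam) * ∫ ω, (F (X s t ω) - F xstar) ∂P
              + 2 * lam * (1 / μ * V + 1 / 2 * ∫ ω, (F (X s t ω) - F xstar) ∂P))
            + lam ^ 2 * (2 * (CD * (4 / μ * ∫ ω, (F (X s t ω) - F xstar) ∂P + 4 / μ * G))
              + 2 * (4 * L * G + 2 * V)) := add_le_add (add_le_add_right m1 _) m2
        _ = ∫ ω, ‖X s t ω - xstar‖ ^ 2 ∂P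
            - lam * (1 - 8 / μ * CD * lam) * ∫ ω, (F (X s t ω) - F xstar) ∂P
            + lam ^ 2 * (8 / μ * CD + 8 * L) * G + (2 * lam / μ + 4 * lam ^ 2) * V := by
            ring
    -- ===== sum the per-step inequality over the epoch =====
    have cum : ∀ n : ℕ, ∫ ω, ‖X s n ω - xstar‖ ^ 2 ∂P
        + lam * (1 - 8 / μ * CD * lam)
          * ∑ t ∈ Finset.range n, ∫ ω, (F (X s t ω) - F xstar) ∂P
        ≤ ∫ ω, ‖X s 0 ω - xstar‖ ^ 2 ∂P
          + n * (lam ^ 2 * (8 / μ * CD + 8 * L) * G + (2 * lam / μ + 4 * lam ^ 2) * V) := by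
      intro n
      induction n with
      | zero => simp
      | succ k ih =>
          have hs := step k
          rw [Finset.sum_range_succ]
          push_cast
          linarith
    have hb0 : ∫ ω, ‖X s 0 ω - xstar‖ ^ 2 ∂P ≤ 2 / μ * G := by
      have h1 : ∫ ω, ‖X s 0 ω - xstar‖ ^ 2 ∂P
          ≤ ∫ ω, 2 / μ * (F (xt s ω) - F xstar) ∂P := by
        refine integral_mono (intYd2 0) (intFG.const_mul _) (fun ω => ?_)
        dsimp only
        rw [hstart s ω]
        exact hq2 _ (hrefD s ω)
      have em : ∫ ω, 2 / μ * (F (xt s ω) - F xstar) ∂P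
          = 2 / μ * ∫ ω, (F (xt s ω) - F xstar) ∂P := integral_const_mul _ _
      rw [em] at h1
      exact h1
    have hbM : 0 ≤ ∫ ω, ‖X s M ω - xstar‖ ^ 2 ∂P := integral_nonneg fun ω => by positivity
    have hsumM : lam * (1 - 8 / μ * CD * lam)
          * ∑ t ∈ Finset.range M, ∫ ω, (F (X s t ω) - F xstar) ∂P
        ≤ 2 / μ * G
          + M * (lam ^ 2 * (8 / μ * CD + 8 * L) * G + (2 * lam / μ + 4 * lam ^ 2) * V) := by
      have := cum M
      linarith
    -- ===== identify the epoch output =====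
    have hAs : ∫ ω, (F (xt (s+1) ω) - F xstar) ∂P
        = (1 / M) * ∑ t ∈ Finset.range M, ∫ ω, (F (X s t ω) - F xstar) ∂P := by
      have h1 : ∫ ω, (F (xt (s+1) ω) - F xstar) ∂P
          = (∫ ω, F (xt (s+1) ω) ∂P) - F xstar := by
        rw [integral_sub (hFint (s+1)) (integrable_const _), integral_const]
        simp
      have h2 : ∀ t, ∫ ω, (F (X s t ω) - F xstar) ∂P = (∫ ω, F (X s t ω) ∂P) - F xstar := by
        intro t
        rw [integral_sub (hFXint s t) (integrable_const _), integral_const]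
        simp
      have h3 : ∑ t ∈ Finset.range M, ∫ ω, (F (X s t ω) - F xstar) ∂P
          = (∑ t ∈ Finset.range M, ∫ ω, F (X s t ω) ∂P) - M * F xstar := by
        rw [Finset.sum_congr rfl fun t _ => h2 t, Finset.sum_sub_distrib,
          Finset.sum_const, Finset.card_range, nsmul_eq_mul]
      rw [h1, hout s, h3]
      field_simp
    -- ===== conclude =====
    rw [hAs]
    have hS : ∑ t ∈ Finset.range M, ∫ ω, (F (X s t ω) - F xstar) ∂P
        ≤ (2 / μ * G
            + M * (lam ^ 2 * (8 / μ * CD + 8 * L) * G + (2 * lam / μ + 4 * lam ^ 2) * V))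
          / (lam * (1 - 8 / μ * CD * lam)) := by
      rw [le_div_iff₀ hco]
      linarith
    have hfinal : (1 / (M:ℝ)) * ((2 / μ * G
            + M * (lam ^ 2 * (8 / μ * CD + 8 * L) * G + (2 * lam / μ + 4 * lam ^ 2) * V))
          / (lam * (1 - 8 / μ * CD * lam)))
        = α * G + (2 / μ + 4 * lam) / (1 - 8 / μ * CD * lam) * V := by
      rw [hα]
      exact scsg_arith G V lam μ (M:ℝ) (8 / μ * CD + 8 * L) (1 - 8 / μ * CD * lam)
        hμ'.ne' hlam.ne' hMpos.ne' hden.ne'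
    have hVVh : V ≤ Vh := hVh s
    calc (1 / (M:ℝ)) * ∑ t ∈ Finset.range M, ∫ ω, (F (X s t ω) - F xstar) ∂P
        ≤ (1 / (M:ℝ)) * ((2 / μ * G
            + M * (lam ^ 2 * (8 / μ * CD + 8 * L) * G + (2 * lam / μ + 4 * lam ^ 2) * V))
          / (lam * (1 - 8 / μ * CD * lam))) := by
          exact mul_le_mul_of_nonneg_left hS (by positivity)
      _ = α * G + (2 / μ + 4 * lam) / (1 - 8 / μ * CD * lam) * V := hfinal
      _ ≤ α * G + epsP := by
          have hcoef : (2 / μ + 4 * lam) / (1 - 8 / μ * CD * lam)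
              = 4 * (lam + 1 / (2 * μ)) / (1 - 8 / μ * CD * lam) := by
            congr 1
            field_simp
            ring
          rw [hcoef, hepsPdef]
          have hcnn : 0 ≤ 4 * (lam + 1 / (2 * μ)) / (1 - 8 / μ * CD * lam) := by positivity
          exact add_le_add_right (mul_le_mul_of_nonneg_left hVVh hcnn) _

  -- ======== nonnegativity of Vh and epsP ========
  have hVnn : 0 ≤ Vh := le_trans (integral_nonneg fun ω => by positivity) (hVh 0)
  have hepsPnn : 0 ≤ epsP := by
    rw [hepsPdef]
    have h1 : 0 ≤ 4 * (lam + 1 / (2 * μ)) / (1 - 8 / μ * CD * lam) := by positivity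
    exact mul_nonneg h1 hVnn
  have hepsP : epsP < ε := hVeps
  -- ======== positivity of α ========
  have hαpos : 0 < α := by
    rw [hα]
    have h1 : 0 < μ * (1 - 8 / μ * CD * lam) * lam * M :=
      mul_pos (mul_pos (mul_pos hμ hden) hlam) hMpos
    have h2 : 0 < (8 / μ * CD + 8 * L) * lam :=
      mul_pos (by positivity) hlam
    exact add_pos (div_pos two_pos h1) (div_pos h2 hden)
  -- ======== E0 ========
  have hE0 : ∫ ω, (F (xt 0 ω) - F xstar) ∂P = F x0 - F xstar := by
    have : (fun ω => F (xt 0 ω) - F xstar) = fun _ => F x0 - F xstar := by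
      funext ω; rw [hx0 ω]
    rw [this, integral_const]
    simp
  -- ======== final induction ========
  have h1α : 0 < 1 - α := by linarith
  have hεdiv : 0 ≤ ε / (1 - α) := le_of_lt (div_pos hε h1α)
  intro s
  induction s with
  | zero =>
      rw [hE0, pow_zero, one_mul]
      linarith
  | succ n ih =>
      have h2 := key n
      have h3 : α * ∫ ω, (F (xt n ω) - F xstar) ∂P
          ≤ α * (α ^ n * (F x0 - F xstar) + ε / (1 - α)) :=
        mul_le_mul_of_nonneg_left ih (le_of_lt hαpos)
      have h4 : α * (ε / (1 - α)) + ε = ε / (1 - α) := by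
        field_simp
        ring
      calc ∫ ω, (F (xt (n+1) ω) - F xstar) ∂P
          ≤ α * ∫ ω, (F (xt n ω) - F xstar) ∂P + epsP := h2
        _ ≤ α * (α ^ n * (F x0 - F xstar) + ε / (1 - α)) + epsP := by linarith
        _ ≤ α ^ (n+1) * (F x0 - F xstar) + ε / (1 - α) := by
            rw [mul_add, ← mul_assoc, ← pow_succ']
            have : α * (ε / (1 - α)) + epsP ≤ ε / (1 - α) := by
              calc α * (ε / (1 - α)) + epsP ≤ α * (ε / (1 - α)) + ε := by linarith
                _ = ε / (1 - α) := h4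
            linarith
end

section
/- (Almost sure ε-optimality of Simulated SCSG.) Let {x̃_s}_{s≥0} be the epoch outputs of the Simulated SCSG algorithm and define ỹ_s = min_{t ≤ s} {F(x̃_t) − F(x⋆)}. Under the hypotheses guaranteeing the per-epoch recursion E[F(x̃_s) − F(x⋆)] ≤ α·E[F(x̃_{s−1}) − F(x⋆)] + ε (uniformly over the starting point in D) with 0 < α < 1, and given that sup_{x∈D}{F(x) − F(x⋆)} ≤ 2l_D, one has with probability 1: inf_{s≥0} ỹ_s ≤ ε/(1−α). -/
open MeasureTheory

private lemma scsg_condexp_iterate {Ω : Type*} [mΩ : MeasurableSpace Ω] (P : Measure Ω)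
    [IsProbabilityMeasure P]
    (𝓕 : ℕ → MeasurableSpace Ω) (hle : ∀ s, 𝓕 s ≤ mΩ) (hmono : Monotone 𝓕)
    (Z : ℕ → Ω → ℝ) (hadp : ∀ s, StronglyMeasurable[𝓕 s] (Z s))
    (hint : ∀ s, Integrable (Z s) P)
    (α ε : ℝ) (hα0 : 0 ≤ α)
    (hrec : ∀ s, (P[Z (s + 1) | 𝓕 s]) ≤ᵐ[P] fun ω => α * Z s ω + ε) :
    ∀ s k, (P[Z (s + k) | 𝓕 s]) ≤ᵐ[P]
      fun ω => α ^ k * Z s ω + ε * ∑ i ∈ Finset.range k, α ^ i := by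
  intro s k
  induction k with
  | zero =>
      rw [Nat.add_zero, condExp_of_stronglyMeasurable (hle s) (hadp s) (hint s)]
      filter_upwards with ω
      simp
  | succ k ih =>
      have h1 : (P[Z (s + (k + 1)) | 𝓕 s])
          =ᵐ[P] (P[(P[Z (s + k + 1) | 𝓕 (s + k)]) | 𝓕 s]) := by
        rw [show s + (k + 1) = s + k + 1 by ring]
        exact (condExp_condExp_of_le (hmono (Nat.le_add_right s k)) (hle (s + k))).symm
      have hg_int : Integrable (fun ω => α * Z (s + k) ω + ε) P :=
        ((hint (s + k)).const_mul α).add (integrable_const ε)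
      have h2 : (P[(P[Z (s + k + 1) | 𝓕 (s + k)]) | 𝓕 s])
          ≤ᵐ[P] (P[(fun ω => α * Z (s + k) ω + ε) | 𝓕 s]) :=
        condExp_mono integrable_condExp hg_int (hrec (s + k))
      have h3 : (P[(fun ω => α * Z (s + k) ω + ε) | 𝓕 s])
          =ᵐ[P] fun ω => α * (P[Z (s + k) | 𝓕 s]) ω + ε := by
        have hadd : (P[(fun ω => α * Z (s + k) ω + ε) | 𝓕 s])
            =ᵐ[P] (P[(fun ω => α * Z (s + k) ω) | 𝓕 s]) + (P[(fun _ => ε) | 𝓕 s]) :=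
          condExp_add ((hint (s + k)).const_mul α) (integrable_const ε) (𝓕 s)
        have hsmul : (P[(fun ω => α * Z (s + k) ω) | 𝓕 s])
            =ᵐ[P] fun ω => α * (P[Z (s + k) | 𝓕 s]) ω := by
          have := condExp_smul (μ := P) (m := 𝓕 s) α (Z (s + k))
          exact this
        have hconst : (P[(fun _ : Ω => ε) | 𝓕 s]) = fun _ => ε := condExp_const (hle s) ε
        filter_upwards [hadd, hsmul] with ω h1 h2
        rw [h1]
        simp only [Pi.add_apply, hconst, h2]
      have h4 : (fun ω => α * (P[Z (s + k) | 𝓕 s]) ω + ε)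
          ≤ᵐ[P] fun ω => α ^ (k + 1) * Z s ω + ε * ∑ i ∈ Finset.range (k + 1), α ^ i := by
        filter_upwards [ih] with ω hω
        have := mul_le_mul_of_nonneg_left hω hα0
        calc α * (P[Z (s + k) | 𝓕 s]) ω + ε
            ≤ α * (α ^ k * Z s ω + ε * ∑ i ∈ Finset.range k, α ^ i) + ε := by linarith
          _ = α ^ (k + 1) * Z s ω + ε * ∑ i ∈ Finset.range (k + 1), α ^ i := by
              rw [geom_sum_succ]; ring
      exact h1.le.trans (h2.trans (h3.le.trans h4))

/-- (Almost sure ε-optimality of Simulated SCSG.) If the epoch outputs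
`x̃ s` of the Simulated SCSG algorithm lie in a compact set `D` on which `F − F(x⋆)` is bounded
by `2 l_D`, and the conditional per-epoch recursion
`E[F(x̃ (s+1)) − F(x⋆) | past] ≤ α (F(x̃ s) − F(x⋆)) + ε` holds with `0 < α < 1`, then with
probability one the running minimum `ỹ s = min_{t ≤ s} (F(x̃ t) − F(x⋆))` satisfies
`inf_s ỹ s ≤ ε / (1 − α)`. -/
theorem simulated_scsg_as_eps_optimality
    {p : ℕ} {Ω : Type*} [mΩ : MeasurableSpace Ω] (P : Measure Ω) [IsProbabilityMeasure P]
    (F : EuclideanSpace ℝ (Fin p) → ℝ) (xstar : EuclideanSpace ℝ (Fin p))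
    (D : Set (EuclideanSpace ℝ (Fin p))) (hD : IsCompact D)
    (xt : ℕ → Ω → EuclideanSpace ℝ (Fin p)) (hin : ∀ s ω, xt s ω ∈ D)
    (lD : ℝ) (hbd : ∀ x ∈ D, F x - F xstar ≤ 2 * lD)
    (hmin : ∀ y, F xstar ≤ F y)
    (𝓕 : ℕ → MeasurableSpace Ω) (hle : ∀ s, 𝓕 s ≤ mΩ) (hmono : Monotone 𝓕)
    (hadapted : ∀ s, Measurable[𝓕 s] fun ω => F (xt s ω))
    (α ε : ℝ) (hα0 : 0 < α) (hα1 : α < 1) (hε : 0 < ε)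
    (hrec : ∀ s, (P[fun ω => F (xt (s + 1) ω) - F xstar | 𝓕 s])
        ≤ᵐ[P] fun ω => α * (F (xt s ω) - F xstar) + ε) :
    ∀ᵐ ω ∂P, (⨅ s : ℕ,
        (Finset.range (s + 1)).inf' (by simp) fun t => F (xt t ω) - F xstar)
      ≤ ε / (1 - α) := by
  classical
  set Z : ℕ → Ω → ℝ := fun s ω => F (xt s ω) - F xstar with hZdef
  have h1α : (0:ℝ) < 1 - α := by linarith
  set M : ℝ := ε / (1 - α) with hMdef
  have hM0 : 0 < M := div_pos hε h1α
  have hΩ : Nonempty Ω := by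
    by_contra h
    rw [not_nonempty_iff] at h
    have h1 := measure_univ (μ := P)
    rw [Set.univ_eq_empty_iff.2 h, measure_empty] at h1
    exact zero_ne_one h1
  have hZ0 : ∀ s ω, 0 ≤ Z s ω := fun s ω => sub_nonneg.2 (hmin _)
  have hZb : ∀ s ω, Z s ω ≤ 2 * lD := fun s ω => hbd _ (hin s ω)
  have hlD : 0 ≤ 2 * lD := (hZ0 0 hΩ.some).trans (hZb 0 hΩ.some)
  have hZmeas : ∀ s, Measurable[𝓕 s] (Z s) := fun s => (hadapted s).sub measurable_const
  have hsm : ∀ s, StronglyMeasurable[𝓕 s] (Z s) := fun s => (hZmeas s).stronglyMeasurable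
  have hZm : ∀ s, Measurable (Z s) := fun s => (hZmeas s).mono (hle s) le_rfl
  have hint : ∀ s, Integrable (Z s) P := fun s =>
    (integrable_const (2 * lD)).mono' (hZm s).aestronglyMeasurable
      (Filter.Eventually.of_forall fun ω => by
        rw [Real.norm_eq_abs, abs_of_nonneg (hZ0 s ω)]; exact hZb s ω)
  have hiter := scsg_condexp_iterate P 𝓕 hle hmono Z hsm hint α ε hα0.le hrec
  have hgeom : ∀ k : ℕ, ε * ∑ i ∈ Finset.range k, α ^ i ≤ M := by
    intro k
    have hs : ∑ i ∈ Finset.range k, α ^ i = (1 - α ^ k) / (1 - α) := by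
      rw [geom_sum_eq hα1.ne k, div_eq_div_iff (sub_ne_zero.2 hα1.ne) h1α.ne']
      ring
    rw [hs, hMdef]
    have hnum : 1 - α ^ k ≤ 1 := by
      have : 0 ≤ α ^ k := pow_nonneg hα0.le k
      linarith
    calc ε * ((1 - α ^ k) / (1 - α)) ≤ ε * (1 / (1 - α)) := by
          exact mul_le_mul_of_nonneg_left ((div_le_div_iff_of_pos_right h1α).2 hnum) hε.le
      _ = ε / (1 - α) := by ring
  -- Core step: for each δ > 0, a.s. some epoch gets within M + δ.
  have core : ∀ δ : ℝ, 0 < δ → ∀ᵐ ω ∂P, ∃ s, Z s ω ≤ M + δ := by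
    intro δ hδ
    obtain ⟨k, hk⟩ : ∃ k : ℕ, α ^ k * (2 * lD) < δ := by
      have h := (tendsto_pow_atTop_nhds_zero_of_lt_one hα0.le hα1).mul_const (2 * lD)
      rw [zero_mul] at h
      exact (h.eventually (gt_mem_nhds hδ)).exists
    set β : ℝ := (α ^ k * (2 * lD) + M) / (M + δ) with hβdef
    have hMδ : 0 < M + δ := by linarith
    have hnum0 : 0 ≤ α ^ k * (2 * lD) + M :=
      add_nonneg (mul_nonneg (pow_nonneg hα0.le k) hlD) hM0.le
    have hβ0 : 0 ≤ β := div_nonneg hnum0 hMδ.le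
    have hβ1 : β < 1 := (div_lt_one hMδ).2 (by linarith)
    set A : ℕ → Set Ω := fun n => {ω | ∀ j ≤ n, M + δ < Z (j * k) ω} with hAdef
    have hAmeas : ∀ n, MeasurableSet[𝓕 (n * k)] (A n) := by
      intro n
      have hAeq : A n = ⋂ j ∈ Set.Iic n, {ω | M + δ < Z (j * k) ω} := by
        ext ω; simp [hAdef, Set.mem_iInter]
      rw [hAeq]
      refine MeasurableSet.biInter ((Set.finite_Iic n).countable) fun j hj => ?_
      exact measurableSet_lt measurable_const
        ((hZmeas (j * k)).mono (hmono (Nat.mul_le_mul_right k hj)) le_rfl)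
    have hAm : ∀ n, MeasurableSet (A n) := fun n => (hle _) _ (hAmeas n)
    have hAsub : ∀ n, A (n + 1) ⊆ A n := fun n ω hω j hj => hω j (hj.trans (Nat.le_succ n))
    have key : ∀ n, (P (A (n + 1))).toReal ≤ β * (P (A n)).toReal := by
      intro n
      have hchain : (M + δ) * (P (A (n + 1))).toReal
          ≤ (α ^ k * (2 * lD) + M) * (P (A n)).toReal := by
        have step1 : (M + δ) * (P (A (n + 1))).toReal
            ≤ ∫ ω in A (n + 1), Z ((n + 1) * k) ω ∂P := by
          have hc : ∫ _ω in A (n + 1), (M + δ) ∂P = (P (A (n + 1))).toReal * (M + δ) := by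
            rw [setIntegral_const, smul_eq_mul]; rfl
          rw [mul_comm, ← hc]
          exact setIntegral_mono_on (integrable_const _).integrableOn
            (hint _).integrableOn (hAm (n + 1)) (fun ω hω => (hω (n + 1) le_rfl).le)
        have step2 : ∫ ω in A (n + 1), Z ((n + 1) * k) ω ∂P
            ≤ ∫ ω in A n, Z ((n + 1) * k) ω ∂P :=
          setIntegral_mono_set (hint _).integrableOn
            (Filter.Eventually.of_forall fun ω => hZ0 _ ω)
            (HasSubset.Subset.eventuallyLE (hAsub n))
        have step3 : ∫ ω in A n, Z ((n + 1) * k) ω ∂P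
            = ∫ ω in A n, (P[Z ((n + 1) * k) | 𝓕 (n * k)]) ω ∂P :=
          (setIntegral_condExp (hle (n * k)) (hint _) (hAmeas n)).symm
        have hce : (P[Z ((n + 1) * k) | 𝓕 (n * k)])
            ≤ᵐ[P] fun _ => α ^ k * (2 * lD) + M := by
          have hit := hiter (n * k) k
          rw [show n * k + k = (n + 1) * k by ring] at hit
          filter_upwards [hit] with ω hω
          calc (P[Z ((n + 1) * k) | 𝓕 (n * k)]) ω
              ≤ α ^ k * Z (n * k) ω + ε * ∑ i ∈ Finset.range k, α ^ i := hω
            _ ≤ α ^ k * (2 * lD) + M :=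
                add_le_add (mul_le_mul_of_nonneg_left (hZb _ ω) (pow_nonneg hα0.le k))
                  (hgeom k)
        have step4 : ∫ ω in A n, (P[Z ((n + 1) * k) | 𝓕 (n * k)]) ω ∂P
            ≤ ∫ _ω in A n, (α ^ k * (2 * lD) + M) ∂P :=
          setIntegral_mono_ae integrable_condExp.integrableOn
            (integrable_const _).integrableOn hce
        have step5 : ∫ _ω in A n, (α ^ k * (2 * lD) + M) ∂P
            = (α ^ k * (2 * lD) + M) * (P (A n)).toReal := by
          rw [setIntegral_const, smul_eq_mul, mul_comm]; rfl
        calc (M + δ) * (P (A (n + 1))).toReal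
            ≤ ∫ ω in A (n + 1), Z ((n + 1) * k) ω ∂P := step1
          _ ≤ ∫ ω in A n, Z ((n + 1) * k) ω ∂P := step2
          _ = ∫ ω in A n, (P[Z ((n + 1) * k) | 𝓕 (n * k)]) ω ∂P := step3
          _ ≤ ∫ _ω in A n, (α ^ k * (2 * lD) + M) ∂P := step4
          _ = (α ^ k * (2 * lD) + M) * (P (A n)).toReal := step5
      calc (P (A (n + 1))).toReal = ((M + δ) * (P (A (n + 1))).toReal) / (M + δ) := by
            field_simp
        _ ≤ ((α ^ k * (2 * lD) + M) * (P (A n)).toReal) / (M + δ) :=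
            (div_le_div_iff_of_pos_right hMδ).2 hchain
        _ = β * (P (A n)).toReal := by rw [hβdef]; ring
    have hbound : ∀ n, (P (A n)).toReal ≤ β ^ n := by
      intro n
      induction n with
      | zero =>
          rw [pow_zero]
          calc (P (A 0)).toReal ≤ (1 : ENNReal).toReal :=
                ENNReal.toReal_mono ENNReal.one_ne_top prob_le_one
            _ = 1 := ENNReal.toReal_one
      | succ n ih =>
          calc (P (A (n + 1))).toReal ≤ β * (P (A n)).toReal := key n
            _ ≤ β * β ^ n := mul_le_mul_of_nonneg_left ih hβ0
            _ = β ^ (n + 1) := (pow_succ' β n).symm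
    have htend : Filter.Tendsto (fun n => (P (A n)).toReal) Filter.atTop (nhds 0) :=
      squeeze_zero (fun n => ENNReal.toReal_nonneg) hbound
        (tendsto_pow_atTop_nhds_zero_of_lt_one hβ0 hβ1)
    rw [ae_iff]
    have hbad : {ω | ¬ ∃ s, Z s ω ≤ M + δ} ⊆ ⋂ n, A n := by
      intro ω hω
      push_neg at hω
      exact Set.mem_iInter.2 fun n j _ => hω (j * k)
    have hle0 : (P {ω | ¬ ∃ s, Z s ω ≤ M + δ}).toReal ≤ 0 := by
      refine ge_of_tendsto' htend fun n => ?_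
      exact ENNReal.toReal_mono (measure_ne_top P _)
        (measure_mono (hbad.trans (Set.iInter_subset A n)))
    have h0 : (P {ω | ¬ ∃ s, Z s ω ≤ M + δ}).toReal = 0 :=
      le_antisymm hle0 ENNReal.toReal_nonneg
    exact (ENNReal.toReal_eq_zero_iff _).1 h0 |>.resolve_right (measure_ne_top P _)
  have hae : ∀ᵐ ω ∂P, ∀ m : ℕ, ∃ s, Z s ω ≤ M + 1 / (m + 1) :=
    ae_all_iff.2 fun m => core (1 / (m + 1)) (by positivity)
  filter_upwards [hae] with ω hω
  have hbdd : BddBelow (Set.range fun s : ℕ =>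
      (Finset.range (s + 1)).inf' (by simp) fun t => F (xt t ω) - F xstar) := by
    refine ⟨0, ?_⟩
    rintro x ⟨s, rfl⟩
    exact Finset.le_inf' _ _ fun t _ => hZ0 t ω
  refine le_of_forall_pos_le_add fun η hη => ?_
  obtain ⟨m, hm⟩ := exists_nat_one_div_lt (K := ℝ) hη
  obtain ⟨s, hs⟩ := hω m
  calc (⨅ s : ℕ, (Finset.range (s + 1)).inf' (by simp) fun t => F (xt t ω) - F xstar)
      ≤ (Finset.range (s + 1)).inf' (by simp) fun t => F (xt t ω) - F xstar :=
        ciInf_le hbdd s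
    _ ≤ F (xt s ω) - F xstar := Finset.inf'_le _ (Finset.self_mem_range_succ s)
    _ ≤ M + 1 / (m + 1) := hs
    _ ≤ M + η := add_le_add le_rfl hm.le
end
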